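/- arXiv:2202.09319 — 3 statements merged into one kernel-verified Lean document; each statement's English description precedes it below -/
import Mathlib

section
/- Let T be a finite subgroup of (ℂˣ)³ that is invariant under the two group automorphisms τ(a₁,a₂,a₃) = (a₂/a₁, a₃/a₁, 1/a₁) and σ(a₁,a₂,a₃) = (a₂, a₁, a₃), and let n ≥ 1 be the exponent of T (equivalently, the maximal order of an element of T). Then at least one of the following holds: (1) T = μₙ³, the subgroup of all triples (t₁,t₂,t₃) with t₁ⁿ = t₂ⁿ = t₃ⁿ = 1; (2) n is even and T is isomorphic to ℤ/n × ℤ/n × ℤ/(n/2); (3) n is divisible by 4 and T is isomorphic to ℤ/n × ℤ/n × ℤ/(n/4). -/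
noncomputable section

/-- The group `(ℂˣ)³` of triples of nonzero complex numbers under componentwise
multiplication. -/
abbrev G3 : Type := ℂˣ × ℂˣ × ℂˣ

/-- The subgroup `μₙ³` of triples `(t₁,t₂,t₃)` with `t₁ⁿ = t₂ⁿ = t₃ⁿ = 1`. -/
def muCube (n : ℕ) : Subgroup G3 where
  carrier := {x | x.1 ^ n = 1 ∧ x.2.1 ^ n = 1 ∧ x.2.2 ^ n = 1}
  one_mem' := by simp
  mul_mem' := by
    intro a b ha hb
    refine ⟨?_, ?_, ?_⟩ <;> simp_all [mul_pow]
  inv_mem' := by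
    intro a ha
    refine ⟨?_, ?_, ?_⟩ <;> simp_all [inv_pow]

/-- The automorphism `τ(a₁,a₂,a₃) = (a₂/a₁, a₃/a₁, 1/a₁)` of `(ℂˣ)³`. -/
def tauHom : G3 →* G3 where
  toFun x := (x.2.1 / x.1, x.2.2 / x.1, x.1⁻¹)
  map_one' := by simp
  map_mul' x y := by
    refine Prod.ext ?_ (Prod.ext ?_ ?_) <;>
      simp [div_mul_div_comm, mul_inv, mul_comm]

/-- The automorphism `σ(a₁,a₂,a₃) = (a₂, a₁, a₃)` of `(ℂˣ)³`. -/
def sigmaHom : G3 →* G3 where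
  toFun x := (x.2.1, x.1, x.2.2)
  map_one' := rfl
  map_mul' _ _ := rfl

open AddSubgroup

/-- Auxiliary: the sum homomorphism on `(ZMod n)³`. -/
def sumHom3 (n : ℕ) : (ZMod n × ZMod n × ZMod n) →+ ZMod n where
  toFun v := v.1 + v.2.1 + v.2.2
  map_zero' := by simp
  map_add' v w := by simp only [Prod.fst_add, Prod.snd_add]; ring

lemma gcd_cast_mem {n : ℕ} (Q : AddSubgroup (ZMod n)) {j k : ℕ}
    (hj : ((j : ℕ) : ZMod n) ∈ Q) (hk : ((k : ℕ) : ZMod n) ∈ Q) :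
    ((Nat.gcd j k : ℕ) : ZMod n) ∈ Q := by
  have hb := Nat.gcd_eq_gcd_ab j k
  have heq : ((Nat.gcd j k : ℕ) : ZMod n)
      = (Nat.gcdA j k) • ((j : ℕ) : ZMod n) + (Nat.gcdB j k) • ((k : ℕ) : ZMod n) := by
    have h2 : (((Nat.gcd j k : ℤ)) : ZMod n)
        = ((j * Nat.gcdA j k + k * Nat.gcdB j k : ℤ) : ZMod n) := by rw [← hb]
    push_cast at h2 ⊢
    rw [h2]
    simp [zsmul_eq_mul]
    ring
  rw [heq]
  exact Q.add_mem (Q.zsmul_mem hj _) (Q.zsmul_mem hk _)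

lemma aux_gcd_one {n g1 g2 g3 : ℕ} (hn : 0 < n) (h1 : g1 ∣ n) (h2 : g2 ∣ n) (h3 : g3 ∣ n)
    (h : Nat.lcm (n / g1) (Nat.lcm (n / g2) (n / g3)) = n) :
    Nat.gcd g1 (Nat.gcd g2 g3) = 1 := by
  set g := Nat.gcd g1 (Nat.gcd g2 g3) with hg
  have hgn : g ∣ n := (Nat.gcd_dvd_left _ _).trans h1
  have key : ∀ gi : ℕ, gi ∣ n → g ∣ gi → n / gi ∣ n / g := by
    intro gi hgi hggi
    rw [Nat.dvd_div_iff_mul_dvd hgn]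
    calc g * (n / gi) ∣ gi * (n / gi) := Nat.mul_dvd_mul_right hggi _
      _ = n := Nat.mul_div_cancel' hgi
  have hd1 : n / g1 ∣ n / g := key g1 h1 (Nat.gcd_dvd_left _ _)
  have hd2 : n / g2 ∣ n / g := key g2 h2 ((Nat.gcd_dvd_right _ _).trans (Nat.gcd_dvd_left _ _))
  have hd3 : n / g3 ∣ n / g := key g3 h3 ((Nat.gcd_dvd_right _ _).trans (Nat.gcd_dvd_right _ _))
  have hlcm : Nat.lcm (n / g1) (Nat.lcm (n / g2) (n / g3)) ∣ n / g :=
    Nat.lcm_dvd hd1 (Nat.lcm_dvd hd2 hd3)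
  rw [h] at hlcm
  have hng : n / g ∣ n := Nat.div_dvd_of_dvd hgn
  have heq : n / g = n := Nat.dvd_antisymm hng hlcm
  have hmul : g * (n / g) = n := Nat.mul_div_cancel' hgn
  rw [heq] at hmul
  nlinarith [hmul]

lemma structure_equiv (n d : ℕ) (hn : 0 < n) (hd : d ∣ n) (hd0 : 0 < d) :
    Nonempty ((AddSubgroup.comap (sumHom3 n) (AddSubgroup.zmultiples ((d : ℕ) : ZMod n))) ≃+
      (ZMod n × ZMod n × ZMod (n / d))) := by
  have hnd : 0 < n / d := Nat.div_pos (Nat.le_of_dvd hn hd) hd0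
  haveI : NeZero (n / d) := ⟨hnd.ne'⟩
  haveI : NeZero n := ⟨hn.ne'⟩
  have hcond : (zmultiplesHom (ZMod n) ((d : ℕ) : ZMod n)) ((n / d : ℕ) : ℤ) = 0 := by
    show ((n / d : ℕ) : ℤ) • ((d : ℕ) : ZMod n) = 0
    rw [natCast_zsmul, nsmul_eq_mul, ← Nat.cast_mul, Nat.div_mul_cancel hd, ZMod.natCast_self]
  set L : ZMod (n / d) →+ ZMod n := ZMod.lift (n / d) ⟨_, hcond⟩ with hL
  have hLcoe : ∀ m : ℤ, L ((m : ℤ) : ZMod (n / d)) = m • ((d : ℕ) : ZMod n) := fun m =>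
    ZMod.lift_coe _ _ m
  have hLval : ∀ m : ℕ, L ((m : ℕ) : ZMod (n / d)) = ((m * d : ℕ) : ZMod n) := by
    intro m
    have h := hLcoe (m : ℤ)
    rw [Int.cast_natCast] at h
    rw [h, natCast_zsmul, nsmul_eq_mul, ← Nat.cast_mul]
  have hLinj : ∀ r : ZMod (n / d), L r = 0 → r = 0 := by
    intro r hr
    rw [← ZMod.natCast_zmod_val r, hLval, ZMod.natCast_eq_zero_iff] at hr
    have h2 : n / d * d ∣ r.val * d := by rwa [Nat.div_mul_cancel hd]
    have h3 : n / d ∣ r.val := (Nat.mul_dvd_mul_iff_right hd0).mp h2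
    have h4 : r.val = 0 := Nat.eq_zero_of_dvd_of_lt h3 (ZMod.val_lt r)
    rw [← ZMod.natCast_zmod_val r, h4, Nat.cast_zero]
  set F : (ZMod n × ZMod n × ZMod (n / d)) →+
      ↥(AddSubgroup.comap (sumHom3 n) (AddSubgroup.zmultiples ((d : ℕ) : ZMod n))) :=
    { toFun := fun p => ⟨(p.1, p.2.1, L p.2.2 - p.1 - p.2.1), by
        show sumHom3 n (p.1, p.2.1, L p.2.2 - p.1 - p.2.1) ∈ zmultiples ((d : ℕ) : ZMod n)
        have hs : sumHom3 n (p.1, p.2.1, L p.2.2 - p.1 - p.2.1) = L p.2.2 := by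
          show p.1 + p.2.1 + (L p.2.2 - p.1 - p.2.1) = L p.2.2; ring
        rw [hs, AddSubgroup.mem_zmultiples_iff]
        exact ⟨(p.2.2.val : ℤ), by
          rw [← hLcoe]; congr 1; push_cast; exact ZMod.natCast_zmod_val p.2.2⟩⟩,
      map_zero' := by apply Subtype.ext; simp,
      map_add' := by
        intro p q
        apply Subtype.ext
        show ((p + q).1, (p + q).2.1, L (p + q).2.2 - (p + q).1 - (p + q).2.1)
            = ((p.1, p.2.1, L p.2.2 - p.1 - p.2.1) + (q.1, q.2.1, L q.2.2 - q.1 - q.2.1) :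
                ZMod n × ZMod n × ZMod n)
        simp only [Prod.fst_add, Prod.snd_add, map_add, Prod.mk_add_mk]
        refine Prod.ext rfl (Prod.ext rfl ?_)
        show L p.2.2 + L q.2.2 - (p.1 + q.1) - (p.2.1 + q.2.1) = _
        ring } with hFdef
  have hF : ∀ p, (F p : ZMod n × ZMod n × ZMod n)
      = (p.1, p.2.1, L p.2.2 - p.1 - p.2.1) := fun _ => rfl
  refine ⟨(AddEquiv.ofBijective F ⟨?_, ?_⟩).symm⟩
  · intro p q hpq
    have h := Subtype.ext_iff.mp hpq
    rw [hF, hF, Prod.mk.injEq, Prod.mk.injEq] at h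
    obtain ⟨h1, h2, h3⟩ := h
    rw [h1, h2, sub_left_inj, sub_left_inj] at h3
    have h4 : p.2.2 = q.2.2 := by
      have h5 : L (p.2.2 - q.2.2) = 0 := by rw [map_sub, h3, sub_self]
      have h6 := hLinj _ h5
      rwa [sub_eq_zero] at h6
    exact Prod.ext h1 (Prod.ext h2 h4)
  · rintro ⟨⟨x, y, z⟩, hm⟩
    have hm' : x + y + z ∈ zmultiples ((d : ℕ) : ZMod n) := hm
    obtain ⟨k, hk⟩ := AddSubgroup.mem_zmultiples_iff.mp hm'
    refine ⟨(x, y, ((k : ℤ) : ZMod (n / d))), ?_⟩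
    apply Subtype.ext
    rw [hF]
    refine Prod.ext rfl (Prod.ext rfl ?_)
    show L ((k : ℤ) : ZMod (n / d)) - x - y = z
    rw [hLcoe, hk]
    ring

theorem statement0 (T : Subgroup G3) (hfin : Finite ↥T)
    (htau : Subgroup.map tauHom T = T) (hsigma : Subgroup.map sigmaHom T = T)
    (n : ℕ) (hn1 : 1 ≤ n) (hn : n = Monoid.exponent ↥T) :
    T = muCube n ∨
      (Even n ∧ Nonempty (↥T ≃*
        Multiplicative (ZMod n) × Multiplicative (ZMod n) × Multiplicative (ZMod (n / 2)))) ∨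
      (4 ∣ n ∧ Nonempty (↥T ≃*
        Multiplicative (ZMod n) × Multiplicative (ZMod n) × Multiplicative (ZMod (n / 4)))) := by
  have hn0 : n ≠ 0 := by omega
  haveI : NeZero n := ⟨hn0⟩
  -- the primitive n-th root of unity, as a unit
  obtain ⟨ζ, hζ⟩ : ∃ ζ : ℂˣ, IsPrimitiveRoot ζ n :=
    ⟨_, (Complex.isPrimitiveRoot_exp n hn0).isUnit_unit hn0⟩
  -- the homomorphism `ZMod n → ℂˣ`, `a ↦ ζ ^ a`
  have hcond : (zmultiplesHom (Additive ℂˣ) (Additive.ofMul ζ)) ((n : ℕ) : ℤ) = 0 := by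
    show ((n : ℕ) : ℤ) • (Additive.ofMul ζ) = 0
    rw [← ofMul_zpow]
    rw [zpow_natCast]
    rw [hζ.pow_eq_one]
    rfl
  set u0 : ZMod n →+ Additive ℂˣ := ZMod.lift n ⟨_, hcond⟩ with hu0
  set U : ZMod n → ℂˣ := fun a => (u0 a).toMul with hU
  have hUcoe : ∀ m : ℤ, U ((m : ℤ) : ZMod n) = ζ ^ m := by
    intro m
    show (u0 ((m : ℤ) : ZMod n)).toMul = ζ ^ m
    rw [hu0, ZMod.lift_coe]
    show (m • (Additive.ofMul ζ)).toMul = ζ ^ m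
    rw [toMul_zsmul]
    rfl
  have hU0 : U 0 = 1 := by
    show (u0 0).toMul = 1
    rw [map_zero]; rfl
  have hUadd : ∀ a b : ZMod n, U (a + b) = U a * U b := by
    intro a b
    show (u0 (a + b)).toMul = (u0 a).toMul * (u0 b).toMul
    rw [map_add]; rfl
  have hUneg : ∀ a : ZMod n, U (-a) = (U a)⁻¹ := by
    intro a
    refine eq_inv_of_mul_eq_one_left ?_
    rw [← hUadd, neg_add_cancel, hU0]
  have hUinj : Function.Injective U := by
    intro a b hab
    have h1 : U (a - b) = 1 := by
      rw [sub_eq_add_neg, hUadd, hUneg, hab, mul_inv_cancel]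
    have h2 : (a - b) = (((a - b).val : ℕ) : ZMod n) := (ZMod.natCast_zmod_val _).symm
    rw [h2] at h1
    have h3 : U ((((a - b).val : ℕ) : ℤ) : ZMod n) = 1 := by
      rwa [Int.cast_natCast]
    rw [hUcoe] at h3
    rw [hζ.zpow_eq_one_iff_dvd] at h3
    have h4 : n ∣ (a - b).val := Int.natCast_dvd_natCast.mp (by exact_mod_cast h3)
    have h5 : (a - b).val = 0 := Nat.eq_zero_of_dvd_of_lt h4 (ZMod.val_lt _) 
    have h6 : a - b = 0 := by rw [h2, h5, Nat.cast_zero]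
    exact sub_eq_zero.mp h6
  have hUroot : ∀ w : ℂˣ, w ^ n = 1 → ∃ a : ZMod n, U a = w := by
    intro w hw
    have h1 : w ∈ rootsOfUnity n ℂ := (mem_rootsOfUnity n w).mpr hw
    rw [← hζ.zpowers_eq] at h1
    obtain ⟨k, hk⟩ := Subgroup.mem_zpowers_iff.mp h1
    exact ⟨((k : ℤ) : ZMod n), by rw [hUcoe, hk]⟩
  -- the function `Psi : (ZMod n)³ → (ℂˣ)³`
  set Psi : (ZMod n × ZMod n × ZMod n) → G3 := fun v => (U v.1, U v.2.1, U v.2.2) with hPsi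
  have hPsi0 : Psi 0 = 1 := by
    show (U 0, U 0, U 0) = 1
    rw [hU0]; rfl
  have hPsiadd : ∀ v w, Psi (v + w) = Psi v * Psi w := by
    intro v w
    show (U (v + w).1, U (v + w).2.1, U (v + w).2.2) = _
    simp only [Prod.fst_add, Prod.snd_add, hUadd]
    rfl
  have hPsineg : ∀ v, Psi (-v) = (Psi v)⁻¹ := by
    intro v
    show (U (-v).1, U (-v).2.1, U (-v).2.2) = _
    simp only [Prod.fst_neg, Prod.snd_neg, hUneg]
    rfl
  have hPsiinj : Function.Injective Psi := by
    intro v w hvw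
    rw [hPsi] at hvw
    simp only [Prod.mk.injEq] at hvw
    exact Prod.ext (hUinj hvw.1) (Prod.ext (hUinj hvw.2.1) (hUinj hvw.2.2))
  have hPsipow : ∀ (k : ℕ) v, Psi (k • v) = (Psi v) ^ k := by
    intro k v
    induction k with
    | zero => simp [hPsi0]
    | succ m ih => rw [succ_nsmul, hPsiadd, ih, pow_succ]
  -- the subgroup `A'` of `(ZMod n)³` corresponding to `T`
  set A' : AddSubgroup (ZMod n × ZMod n × ZMod n) :=
    { carrier := {v | Psi v ∈ T},
      zero_mem' := by show Psi 0 ∈ T; rw [hPsi0]; exact T.one_mem,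
      add_mem' := by
        intro v w hv hw
        show Psi (v + w) ∈ T
        rw [hPsiadd]
        exact T.mul_mem hv hw,
      neg_mem' := by
        intro v hv
        show Psi (-v) ∈ T
        rw [hPsineg]
        exact T.inv_mem hv } with hA'
  have hmemA : ∀ v, v ∈ A' ↔ Psi v ∈ T := fun v => Iff.rfl
  -- T is contained in muCube n
  have hTpow : ∀ g ∈ T, g ^ n = 1 := by
    intro g hg
    have h1 : (⟨g, hg⟩ : ↥T) ^ n = 1 := by
      rw [hn]; exact Monoid.pow_exponent_eq_one _
    have h2 := congrArg (Subgroup.subtype T) h1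
    simpa using h2
  have hTmu : ∀ g ∈ T, g ∈ muCube n := by
    intro g hg
    have h1 := hTpow g hg
    refine ⟨?_, ?_, ?_⟩
    · have := congrArg Prod.fst h1; simpa using this
    · have := congrArg (fun p => p.2.1) h1; simpa using this
    · have := congrArg (fun p => p.2.2) h1; simpa using this
  have hTrange : ∀ g ∈ T, ∃ v, Psi v = g := by
    intro g hg
    obtain ⟨hg1, hg2, hg3⟩ := hTmu g hg
    obtain ⟨a, ha⟩ := hUroot _ hg1
    obtain ⟨b, hb⟩ := hUroot _ hg2
    obtain ⟨c, hc⟩ := hUroot _ hg3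
    exact ⟨(a, b, c), by rw [hPsi]; simp only; rw [ha, hb, hc]⟩
  -- stability of A' under tau and sigma
  have htauA : ∀ a b c : ZMod n, (a, b, c) ∈ A' → ((b - a, c - a, -a) :
      ZMod n × ZMod n × ZMod n) ∈ A' := by
    intro a b c h
    rw [hmemA] at h ⊢
    have h1 : tauHom (Psi (a, b, c)) ∈ T := htau ▸ Subgroup.mem_map_of_mem tauHom h
    have h2 : tauHom (Psi (a, b, c)) = Psi (b - a, c - a, -a) := by
      show (U b / U a, U c / U a, (U a)⁻¹) = (U (b - a), U (c - a), U (-a))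
      rw [sub_eq_add_neg, sub_eq_add_neg, hUadd, hUadd, hUneg]
      simp [div_eq_mul_inv]
    rwa [h2] at h1
  have hsigA : ∀ a b c : ZMod n, (a, b, c) ∈ A' → ((b, a, c) :
      ZMod n × ZMod n × ZMod n) ∈ A' := by
    intro a b c h
    rw [hmemA] at h ⊢
    have h1 : sigmaHom (Psi (a, b, c)) ∈ T := hsigma ▸ Subgroup.mem_map_of_mem sigmaHom h
    exact h1
  have hAcongr : ∀ (v w : ZMod n × ZMod n × ZMod n), v = w → v ∈ A' → w ∈ A' :=
    fun v w h hv => h ▸ hv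
  -- swap of second and third coordinates
  have hswA : ∀ a b c : ZMod n, (a, b, c) ∈ A' → ((a, c, b) :
      ZMod n × ZMod n × ZMod n) ∈ A' := by
    intro a b c h
    have h1 := htauA _ _ _ h
    have h2 := hsigA _ _ _ h1
    have h3 := htauA _ _ _ h2
    have h4 := htauA _ _ _ h3
    have h5 := htauA _ _ _ h4
    apply hAcongr _ _ _ h5
    simp only [Prod.mk.injEq]
    refine ⟨by ring, by ring, by ring⟩
  -- the (14) map
  have hmA : ∀ a b c : ZMod n, (a, b, c) ∈ A' → ((-a, b - a, c - a) :
      ZMod n × ZMod n × ZMod n) ∈ A' := by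
    intro a b c h
    have h1 := htauA _ _ _ h
    have h2 := htauA _ _ _ h1
    have h3 := htauA _ _ _ h2
    have h4 := hsigA _ _ _ h3
    have h5 := htauA _ _ _ h4
    apply hAcongr _ _ _ h5
    simp only [Prod.mk.injEq]
    refine ⟨by ring, by ring, by ring⟩
  have h211 : ∀ a b c : ZMod n, (a, b, c) ∈ A' → ((a + a, a, a) :
      ZMod n × ZMod n × ZMod n) ∈ A' := by
    intro a b c h
    have h1 := hmA _ _ _ h
    have h2 := A'.sub_mem h h1
    apply hAcongr _ _ _ h2
    simp only [Prod.mk_sub_mk, Prod.mk.injEq]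
    refine ⟨by ring, by ring, by ring⟩
  -- an element of additive order n
  have hEE : Monoid.ExponentExists ↥T := Monoid.exponent_ne_zero.mp (by rw [← hn]; exact hn0)
  obtain ⟨g, hg⟩ := Monoid.exists_orderOf_eq_exponent hEE
  obtain ⟨v, hv⟩ := hTrange (g : G3) g.2
  have hvA : v ∈ A' := by rw [hmemA, hv]; exact g.2
  have hordPsi : orderOf (Psi v) = n := by
    rw [hv]
    have h1 : orderOf ((g : G3)) = orderOf g :=
      orderOf_injective T.subtype T.subtype_injective g
    rw [h1, hg, ← hn]
  have hord : addOrderOf v = n := by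
    apply Nat.dvd_antisymm
    · rw [addOrderOf_dvd_iff_nsmul_eq_zero]
      apply hPsiinj
      rw [hPsipow, hPsi0, ← hordPsi]
      exact pow_orderOf_eq_one _
    · have hpow : Psi v ^ addOrderOf v = 1 := by
        rw [← hPsipow, addOrderOf_nsmul_eq_zero, hPsi0]
      have hdvd : orderOf (Psi v) ∣ addOrderOf v := orderOf_dvd_iff_pow_eq_one.mpr hpow
      rwa [hordPsi] at hdvd
  obtain ⟨a, b, c⟩ := v
  -- gcd computation
  have hlcm : Nat.lcm (addOrderOf a) (Nat.lcm (addOrderOf b) (addOrderOf c)) = n := by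
    rw [Prod.addOrderOf, Prod.addOrderOf] at hord
    exact hord
  have hoa : addOrderOf a = n / Nat.gcd n a.val := by
    conv_lhs => rw [← ZMod.natCast_zmod_val a]
    exact ZMod.addOrderOf_coe a.val hn0
  have hob : addOrderOf b = n / Nat.gcd n b.val := by
    conv_lhs => rw [← ZMod.natCast_zmod_val b]
    exact ZMod.addOrderOf_coe b.val hn0
  have hoc : addOrderOf c = n / Nat.gcd n c.val := by
    conv_lhs => rw [← ZMod.natCast_zmod_val c]
    exact ZMod.addOrderOf_coe c.val hn0
  have hgcd1 : Nat.gcd (Nat.gcd n a.val) (Nat.gcd (Nat.gcd n b.val) (Nat.gcd n c.val)) = 1 := by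
    apply aux_gcd_one (Nat.pos_of_ne_zero hn0) (Nat.gcd_dvd_left _ _) (Nat.gcd_dvd_left _ _)
      (Nat.gcd_dvd_left _ _)
    rw [← hoa, ← hob, ← hoc]
    exact hlcm
  -- the subgroup of scalars x with (2x, x, x) ∈ A'
  set qmap : ZMod n →+ (ZMod n × ZMod n × ZMod n) :=
    { toFun := fun x => (x + x, x, x),
      map_zero' := by simp,
      map_add' := by
        intro x y
        refine Prod.ext ?_ rfl
        show x + y + (x + y) = x + x + (y + y)
        ring } with hqmap
  set Qset : AddSubgroup (ZMod n) := AddSubgroup.comap qmap A' with hQset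
  have hQa : a ∈ Qset := AddSubgroup.mem_comap.mpr (h211 a b c hvA)
  have hQb : b ∈ Qset := AddSubgroup.mem_comap.mpr (h211 b a c (hsigA a b c hvA))
  have hQc : c ∈ Qset :=
    AddSubgroup.mem_comap.mpr (h211 c a b (hsigA a c b (hswA a b c hvA)))
  have hQav : ((a.val : ℕ) : ZMod n) ∈ Qset := by rw [ZMod.natCast_zmod_val]; exact hQa
  have hQbv : ((b.val : ℕ) : ZMod n) ∈ Qset := by rw [ZMod.natCast_zmod_val]; exact hQb
  have hQcv : ((c.val : ℕ) : ZMod n) ∈ Qset := by rw [ZMod.natCast_zmod_val]; exact hQc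
  have hQn : ((n : ℕ) : ZMod n) ∈ Qset := by rw [ZMod.natCast_self]; exact Qset.zero_mem
  have hQ1 : (1 : ZMod n) ∈ Qset := by
    have h1 := gcd_cast_mem Qset hQn hQav
    have h2 := gcd_cast_mem Qset hQn hQbv
    have h3 := gcd_cast_mem Qset hQn hQcv
    have h4 := gcd_cast_mem Qset h2 h3
    have h5 := gcd_cast_mem Qset h1 h4
    rw [hgcd1] at h5
    simpa using h5
  have h2111 : (((1 : ZMod n) + 1, (1 : ZMod n), (1 : ZMod n)) :
      ZMod n × ZMod n × ZMod n) ∈ A' := AddSubgroup.mem_comap.mp hQ1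
  -- generators of the kernel of the sum
  have hgen1 : (((1 : ZMod n), (-1 : ZMod n), (0 : ZMod n)) :
      ZMod n × ZMod n × ZMod n) ∈ A' := by
    have h1 := hsigA _ _ _ h2111
    have h2 := A'.sub_mem h2111 h1
    apply hAcongr _ _ _ h2
    simp only [Prod.mk_sub_mk, Prod.mk.injEq]
    refine ⟨by ring, by ring, by ring⟩
  have hgen2 : (((0 : ZMod n), (1 : ZMod n), (-1 : ZMod n)) :
      ZMod n × ZMod n × ZMod n) ∈ A' := by
    have h1 := hsigA _ _ _ h2111
    have h2 := hswA _ _ _ h1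
    have h3 := A'.sub_mem h1 h2
    apply hAcongr _ _ _ h3
    simp only [Prod.mk_sub_mk, Prod.mk.injEq]
    refine ⟨by ring, by ring, by ring⟩
  have hker : ∀ x y : ZMod n, ((x, y, -x - y) : ZMod n × ZMod n × ZMod n) ∈ A' := by
    intro x y
    have h1 := A'.zsmul_mem hgen1 (x.val : ℤ)
    have h2 := A'.zsmul_mem hgen2 ((x + y).val : ℤ)
    have h3 := A'.add_mem h1 h2
    apply hAcongr _ _ _ h3
    simp only [Prod.smul_mk, Prod.mk_add_mk, Prod.mk.injEq, zsmul_eq_mul]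
    push_cast
    rw [ZMod.natCast_zmod_val, ZMod.natCast_zmod_val]
    refine ⟨by ring, by ring, by ring⟩
  have hker0 : ∀ w : ZMod n × ZMod n × ZMod n, sumHom3 n w = 0 → w ∈ A' := by
    intro w hsum
    have h1 := hker w.1 w.2.1
    apply hAcongr _ _ _ h1
    refine Prod.ext rfl (Prod.ext rfl ?_)
    show -w.1 - w.2.1 = w.2.2
    have hs : w.1 + w.2.1 + w.2.2 = 0 := hsum
    linear_combination -hs
  -- the image subgroup
  set H : AddSubgroup (ZMod n) := AddSubgroup.map (sumHom3 n) A' with hHdef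
  have h4H : (4 : ZMod n) ∈ H := by
    refine AddSubgroup.mem_map.mpr ⟨_, h2111, ?_⟩
    show (1 : ZMod n) + 1 + 1 + 1 = 4
    norm_num
  have hA'eq : ∀ d : ZMod n, d ∈ H → (∀ h ∈ H, h ∈ zmultiples d) →
      A' = AddSubgroup.comap (sumHom3 n) (zmultiples d) := by
    intro d hdH hsub
    ext w
    constructor
    · intro hwA
      exact AddSubgroup.mem_comap.mpr (hsub _ (AddSubgroup.mem_map_of_mem _ hwA))
    · intro hw2
      obtain ⟨w0, hw0A, hw0s⟩ := AddSubgroup.mem_map.mp hdH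
      obtain ⟨k, hk⟩ := AddSubgroup.mem_zmultiples_iff.mp (AddSubgroup.mem_comap.mp hw2)
      have hsub0 : sumHom3 n (w - k • w0) = 0 := by
        rw [map_sub, map_zsmul, hw0s, hk, sub_self]
      have h1 := hker0 _ hsub0
      have h2 := A'.add_mem h1 (A'.zsmul_mem hw0A k)
      apply hAcongr _ _ _ h2
      exact sub_add_cancel w (k • w0)
  -- assembling the final equivalence
  have hfinal : ∀ d : ℕ, 0 < d → d ∣ n →
      A' = AddSubgroup.comap (sumHom3 n) (zmultiples ((d : ℕ) : ZMod n)) →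
      Nonempty (↥T ≃* Multiplicative (ZMod n) × Multiplicative (ZMod n) ×
        Multiplicative (ZMod (n / d))) := by
    intro d hd0 hdn hAeq
    obtain ⟨e2⟩ := structure_equiv n d (Nat.pos_of_ne_zero hn0) hdn hd0
    have hPhiT : ∀ x : Multiplicative ↥A',
        Psi ((Multiplicative.toAdd x : ↥A') : ZMod n × ZMod n × ZMod n) ∈ T :=
      fun x => (Multiplicative.toAdd x).2
    set Phi : Multiplicative ↥A' →* ↥T :=
      { toFun := fun x => ⟨Psi ((Multiplicative.toAdd x : ↥A') :
          ZMod n × ZMod n × ZMod n), hPhiT x⟩,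
        map_one' := by
          apply Subtype.ext
          show Psi ((0 : ZMod n × ZMod n × ZMod n)) = 1
          exact hPsi0,
        map_mul' := by
          intro x y
          apply Subtype.ext
          exact hPsiadd _ _ } with hPhidef
    have hbij : Function.Bijective Phi := by
      constructor
      · intro x y hxy
        have h1 := Subtype.ext_iff.mp hxy
        have h2 := hPsiinj h1
        have h3 : (Multiplicative.toAdd x : ↥A') = Multiplicative.toAdd y := Subtype.ext h2
        exact Multiplicative.toAdd.injective h3
      · intro t
        obtain ⟨w, hw⟩ := hTrange (t : G3) t.2
        have hwA : w ∈ A' := by rw [hmemA, hw]; exact t.2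
        exact ⟨Multiplicative.ofAdd ⟨w, hwA⟩, Subtype.ext hw⟩
    have e1 : ↥T ≃* Multiplicative ↥A' := (MulEquiv.ofBijective Phi hbij).symm
    exact ⟨e1.trans ((AddEquiv.toMultiplicative
      ((AddEquiv.addSubgroupCongr hAeq).trans e2)).trans
      ((MulEquiv.prodMultiplicative _ _).trans
        (MulEquiv.prodCongr (MulEquiv.refl _) (MulEquiv.prodMultiplicative _ _))))⟩
  by_cases h1H : (1 : ZMod n) ∈ H
  · -- case T = muCube n
    left
    have hAtop : ∀ w : ZMod n × ZMod n × ZMod n, w ∈ A' := by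
      intro w
      have hsubH : ∀ h ∈ H, h ∈ zmultiples (1 : ZMod n) := by
        intro h _
        refine AddSubgroup.mem_zmultiples_iff.mpr ⟨(h.val : ℤ), ?_⟩
        rw [zsmul_eq_mul, mul_one]
        push_cast
        exact ZMod.natCast_zmod_val h
      rw [hA'eq 1 h1H hsubH]
      refine AddSubgroup.mem_comap.mpr (AddSubgroup.mem_zmultiples_iff.mpr
        ⟨((sumHom3 n w).val : ℤ), ?_⟩)
      rw [zsmul_eq_mul, mul_one]
      push_cast
      exact ZMod.natCast_zmod_val _
    apply le_antisymm
    · intro g hg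
      exact hTmu g hg
    · intro g hgmu
      obtain ⟨hg1, hg2, hg3⟩ := hgmu
      obtain ⟨x, hx⟩ := hUroot _ hg1
      obtain ⟨y, hy⟩ := hUroot _ hg2
      obtain ⟨z, hz⟩ := hUroot _ hg3
      have hPsig : Psi (x, y, z) = g := by
        rw [hPsi]
        simp only
        rw [hx, hy, hz]
      have := (hmemA (x, y, z)).mp (hAtop (x, y, z))
      rwa [hPsig] at this
  · by_cases h2H : (2 : ZMod n) ∈ H
    · -- case index 2
      right; left
      have hc2 : (((2 : ℕ)) : ZMod n) ∈ H := by
        have : (((2 : ℕ)) : ZMod n) = (2 : ZMod n) := by norm_num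
        rwa [this]
      have hcn : ((n : ℕ) : ZMod n) ∈ H := by rw [ZMod.natCast_self]; exact H.zero_mem
      have hn2 : 2 ∣ n := by
        have hgH := gcd_cast_mem H hc2 hcn
        have hdv : Nat.gcd 2 n ∣ 2 := Nat.gcd_dvd_left _ _
        rcases (Nat.prime_two).eq_one_or_self_of_dvd _ hdv with h | h
        · rw [h] at hgH
          norm_num at hgH
          exact absurd hgH h1H
        · rw [← h]
          exact Nat.gcd_dvd_right 2 n
      have hEven : Even n := by
        obtain ⟨k, hk⟩ := hn2
        exact ⟨k, by omega⟩
      refine ⟨hEven, ?_⟩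
      have hHsub : ∀ h ∈ H, h ∈ zmultiples (2 : ZMod n) := by
        intro h hh
        rcases Nat.even_or_odd h.val with ⟨m, hm⟩ | ⟨m, hm⟩
        · refine AddSubgroup.mem_zmultiples_iff.mpr ⟨(m : ℤ), ?_⟩
          have hhv : ((h.val : ℕ) : ZMod n) = h := ZMod.natCast_zmod_val h
          rw [zsmul_eq_mul, ← hhv, hm]
          push_cast
          ring
        · exfalso
          apply h1H
          have hmem : h - (m : ℤ) • (2 : ZMod n) ∈ H := H.sub_mem hh (H.zsmul_mem h2H m)
          have heq1 : h - (m : ℤ) • (2 : ZMod n) = 1 := by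
            have hhv : ((h.val : ℕ) : ZMod n) = h := ZMod.natCast_zmod_val h
            rw [zsmul_eq_mul, ← hhv, hm]
            push_cast
            ring
          rwa [heq1] at hmem
      have hAeq := hA'eq 2 h2H hHsub
      have hcast : (((2 : ℕ)) : ZMod n) = (2 : ZMod n) := by norm_num
      exact hfinal 2 (by norm_num) hn2 (by rw [hcast]; exact hAeq)
    · -- case index 4
      right; right
      have hc4 : (((4 : ℕ)) : ZMod n) ∈ H := by
        have : (((4 : ℕ)) : ZMod n) = (4 : ZMod n) := by norm_num
        rwa [this]
      have hcn : ((n : ℕ) : ZMod n) ∈ H := by rw [ZMod.natCast_self]; exact H.zero_mem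
      have hn4 : 4 ∣ n := by
        have hgH := gcd_cast_mem H hc4 hcn
        have hdv : Nat.gcd 4 n ∣ 4 := Nat.gcd_dvd_left _ _
        have hle : Nat.gcd 4 n ≤ 4 := Nat.le_of_dvd (by norm_num) hdv
        have hcases : Nat.gcd 4 n = 1 ∨ Nat.gcd 4 n = 2 ∨ Nat.gcd 4 n = 4 := by
          rcases hdv with ⟨e, he⟩
          interval_cases h' : Nat.gcd 4 n <;> omega
        rcases hcases with h | h | h
        · rw [h, Nat.cast_one] at hgH
          exact absurd hgH h1H
        · rw [h] at hgH
          norm_num at hgH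
          exact absurd hgH h2H
        · rw [← h]
          exact Nat.gcd_dvd_right 4 n
      refine ⟨hn4, ?_⟩
      have hHsub : ∀ h ∈ H, h ∈ zmultiples (4 : ZMod n) := by
        intro h hh
        set m := h.val % 4 with hmdef
        set q := h.val / 4 with hqdef
        have hval : h.val = 4 * q + m := by rw [hmdef, hqdef]; omega
        have hmH : ((m : ℕ) : ZMod n) ∈ H := by
          have heqm : ((m : ℕ) : ZMod n) = h - (q : ℤ) • (4 : ZMod n) := by
            have hhv : ((h.val : ℕ) : ZMod n) = h := ZMod.natCast_zmod_val h
            rw [zsmul_eq_mul, ← hhv, hval]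
            push_cast
            ring
          rw [heqm]
          exact H.sub_mem hh (H.zsmul_mem h4H q)
        have hmlt : m < 4 := by rw [hmdef]; omega
        have hmcases : m = 0 ∨ m = 1 ∨ m = 2 ∨ m = 3 := by omega
        rcases hmcases with h0 | h1 | h2 | h3
        · refine AddSubgroup.mem_zmultiples_iff.mpr ⟨(q : ℤ), ?_⟩
          have hhv : ((h.val : ℕ) : ZMod n) = h := ZMod.natCast_zmod_val h
          rw [zsmul_eq_mul, ← hhv, hval, h0]
          push_cast
          ring
        · exfalso
          apply h1H
          rw [h1, Nat.cast_one] at hmH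
          exact hmH
        · exfalso
          apply h2H
          rw [h2] at hmH
          have : (((2 : ℕ)) : ZMod n) = (2 : ZMod n) := by norm_num
          rwa [this] at hmH
        · exfalso
          apply h1H
          rw [h3] at hmH
          have heq1 : (1 : ZMod n) = (3 : ℤ) • (((3 : ℕ)) : ZMod n) + (-2 : ℤ) • (4 : ZMod n) := by
            simp only [zsmul_eq_mul]
            push_cast
            ring
          rw [heq1]
          exact H.add_mem (H.zsmul_mem hmH _) (H.zsmul_mem h4H _)
      have hAeq := hA'eq 4 h4H hHsub
      have hcast : (((4 : ℕ)) : ZMod n) = (4 : ZMod n) := by norm_num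
      exact hfinal 4 (by norm_num) hn4 (by rw [hcast]; exact hAeq)

end
end

section
/- Let T be a finite subgroup of (ℂˣ)³ that is invariant under the two group automorphisms ρ(a₁,a₂,a₃) = (a₂, a₃, a₁) and ς(a₁,a₂,a₃) = (a₂/a₃, a₁/a₃, 1/a₃), and let n ≥ 1 be the exponent of T (equivalently, the maximal order of an element of T). Then at least one of the following holds: (1) T = μₙ³, the subgroup of all triples (t₁,t₂,t₃) with t₁ⁿ = t₂ⁿ = t₃ⁿ = 1; (2) n is even and T is isomorphic to ℤ/n × ℤ/n × ℤ/(n/2); (3) n is divisible by 4 and T is isomorphic to ℤ/n × ℤ/n × ℤ/(n/4). -/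
noncomputable section

/-- The automorphism `ρ(a₁,a₂,a₃) = (a₂, a₃, a₁)` of `(ℂˣ)³`. -/
def rhoHom : G3 →* G3 where
  toFun x := (x.2.1, x.2.2, x.1)
  map_one' := rfl
  map_mul' _ _ := rfl

/-- The automorphism `ς(a₁,a₂,a₃) = (a₂/a₃, a₁/a₃, 1/a₃)` of `(ℂˣ)³`. -/
def varsigmaHom : G3 →* G3 where
  toFun x := (x.2.1 / x.2.2, x.1 / x.2.2, x.2.2⁻¹)
  map_one' := by simp
  map_mul' x y := by
    refine Prod.ext ?_ (Prod.ext ?_ ?_) <;>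
      simp [div_mul_div_comm, mul_inv, mul_comm]

namespace Statement1Aux


abbrev N3 (n : ℕ) : Type := ZMod n × ZMod n × ZMod n

def sum3 {n : ℕ} : N3 n →+ ZMod n where
  toFun x := x.1 + x.2.1 + x.2.2
  map_zero' := by simp
  map_add' x y := by
    simp only [Prod.fst_add, Prod.snd_add]
    ring

def Kd {n : ℕ} (d : ℕ) (hd : d ∣ n) : AddSubgroup (N3 n) :=
  AddMonoidHom.ker ((ZMod.castHom hd (ZMod d)).toAddMonoidHom.comp sum3)

lemma mem_Kd {n d : ℕ} (hd : d ∣ n) (x : N3 n) :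
    x ∈ Kd d hd ↔ (ZMod.castHom hd (ZMod d)) (x.1 + x.2.1 + x.2.2) = 0 := Iff.rfl

def psi {n : ℕ} (d : ℕ) (hd : d ∣ n) : ZMod (n / d) →+ ZMod n :=
  ZMod.lift (n / d) ⟨zmultiplesHom (ZMod n) (d : ZMod n), by
    simp only [zmultiplesHom_apply, natCast_zsmul, nsmul_eq_mul, ← Nat.cast_mul,
      Nat.div_mul_cancel hd, ZMod.natCast_self]⟩

lemma psi_natCast {n d : ℕ} (hd : d ∣ n) (m : ℕ) :
    psi d hd (m : ZMod (n / d)) = ((m * d : ℕ) : ZMod n) := by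
  have : ((m : ℤ) : ZMod (n / d)) = (m : ZMod (n / d)) := by push_cast; rfl
  rw [← this, psi, ZMod.lift_coe]
  simp only [zmultiplesHom_apply, natCast_zsmul, nsmul_eq_mul]
  push_cast
  ring


theorem equivKd {n : ℕ} [NeZero n] (d : ℕ) (hd : d ∣ n) (hd0 : 0 < d) :
    Nonempty ((ZMod n × ZMod n × ZMod (n / d)) ≃+ Kd d hd) := by
  haveI : NeZero d := ⟨hd0.ne'⟩
  haveI : NeZero (n / d) := ⟨by
    have h1 : d ≤ n := Nat.le_of_dvd (Nat.pos_of_ne_zero (NeZero.ne n)) hd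
    exact (Nat.div_ne_zero_iff).mpr ⟨hd0.ne', h1⟩⟩
  let E0 : (ZMod n × ZMod n × ZMod (n / d)) →+ N3 n :=
  { toFun := fun z => (z.1 + psi d hd z.2.2, z.2.1 - z.1, -z.2.1)
    map_zero' := by simp
    map_add' := fun z w => by
      refine Prod.ext ?_ (Prod.ext ?_ ?_) <;>
        simp [Prod.fst_add, Prod.snd_add, map_add] <;> ring }
  have hE0 : ∀ z, E0 z = ((z.1 + psi d hd z.2.2, z.2.1 - z.1, -z.2.1) : N3 n) := fun _ => rfl
  have hmem : ∀ z, E0 z ∈ Kd d hd := by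
    intro z
    rw [mem_Kd, hE0]
    have e : (z.1 + psi d hd z.2.2) + (z.2.1 - z.1) + (-z.2.1) = psi d hd z.2.2 := by ring
    show (ZMod.castHom hd (ZMod d)) ((z.1 + psi d hd z.2.2) + (z.2.1 - z.1) + (-z.2.1)) = 0
    rw [e]
    obtain ⟨m, hm⟩ : ∃ m : ℕ, (m : ZMod (n/d)) = z.2.2 :=
      ⟨(z.2.2).val, ZMod.natCast_rightInverse _⟩
    rw [← hm, psi_natCast hd, ZMod.castHom_apply, ZMod.cast_natCast hd]
    push_cast
    simp [ZMod.natCast_self]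
  have hinj : Function.Injective E0 := by
    rw [injective_iff_map_eq_zero]
    intro z hz
    rw [hE0] at hz
    have h3 : -z.2.1 = 0 := congrArg (fun p => p.2.2) hz
    have h2 : z.2.1 - z.1 = 0 := congrArg (fun p => p.2.1) hz
    have h1 : z.1 + psi d hd z.2.2 = 0 := congrArg (fun p => p.1) hz
    have hz21 : z.2.1 = 0 := by rwa [neg_eq_zero] at h3
    have hz1 : z.1 = 0 := by rw [hz21] at h2; simpa using h2.symm
    have hpsi : psi d hd z.2.2 = 0 := by rw [hz1] at h1; simpa using h1
    have hz22 : z.2.2 = 0 := by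
      obtain ⟨m, hm⟩ : ∃ m : ℕ, (m : ZMod (n/d)) = z.2.2 :=
        ⟨(z.2.2).val, ZMod.natCast_rightInverse _⟩
      rw [← hm, psi_natCast hd] at hpsi
      rw [← hm]
      have hdvd : n ∣ m * d := (ZMod.natCast_eq_zero_iff _ _).mp hpsi
      have : (n / d) * d ∣ m * d := by rwa [Nat.div_mul_cancel hd]
      have : (n / d) ∣ m := (Nat.mul_dvd_mul_iff_right hd0).mp this
      exact (ZMod.natCast_eq_zero_iff _ _).mpr this
    exact Prod.ext hz1 (Prod.ext hz21 hz22)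
  have hsurj : ∀ y : N3 n, y ∈ Kd d hd → ∃ z, E0 z = y := by
    rintro ⟨a, b, c⟩ hy
    rw [mem_Kd] at hy
    set s : ZMod n := a + b + c with hsdef
    have hy' : ((s.val : ℕ) : ZMod d) = 0 := by
      rw [ZMod.natCast_val, ← ZMod.castHom_apply (h := hd)]
      exact hy
    have hdvd : d ∣ s.val := (ZMod.natCast_eq_zero_iff _ _).mp hy'
    refine ⟨(-b - c, -c, ((s.val / d : ℕ) : ZMod (n / d))), ?_⟩
    rw [hE0]
    have hps : psi d hd ((s.val / d : ℕ) : ZMod (n / d)) = s := by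
      rw [psi_natCast hd, Nat.div_mul_cancel hdvd]
      exact ZMod.natCast_rightInverse s
    rw [hps]
    refine Prod.ext ?_ (Prod.ext ?_ ?_) <;> simp [hps, hsdef] <;> ring
  refine ⟨AddEquiv.ofBijective (AddMonoidHom.codRestrict E0 (Kd d hd) hmem) ⟨?_, ?_⟩⟩
  · intro z w h
    have : E0 z = E0 w := congrArg Subtype.val h
    exact hinj this
  · rintro ⟨y, hy⟩
    obtain ⟨z, hz⟩ := hsurj y hy
    refine ⟨z, Subtype.ext ?_⟩
    exact hz



lemma teq {n : ℕ} {a b c d e f : ZMod n} (h1 : a = d) (h2 : b = e) (h3 : c = f) :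
    ((a,b,c) : N3 n) = (d,e,f) := by subst h1; subst h2; subst h3; rfl

lemma tadd {n : ℕ} (a b c d e f : ZMod n) :
    ((a,b,c) : N3 n) + (d,e,f) = (a+d,b+e,c+f) := rfl

lemma tsub {n : ℕ} (a b c d e f : ZMod n) :
    ((a,b,c) : N3 n) - (d,e,f) = (a-d,b-e,c-f) := rfl

lemma tsmul {n : ℕ} (m : ℕ) (a b c : ZMod n) :
    m • ((a,b,c) : N3 n) = (m • a, m • b, m • c) := rfl

def axK {n : ℕ} (S : AddSubgroup (N3 n)) : AddSubgroup (ZMod n) where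
  carrier := {d | ((d, 0, 0) : N3 n) ∈ S}
  zero_mem' := S.zero_mem
  add_mem' := by
    intro a b ha hb
    have h := S.add_mem ha hb
    rw [tadd] at h
    rwa [teq (rfl : a + b = a + b) (add_zero 0) (add_zero 0)] at h
  neg_mem' := by
    intro a ha
    have h := S.neg_mem ha
    have e : -((a,0,0) : N3 n) = ((-a,0,0) : N3 n) := by
      refine Prod.ext rfl (Prod.ext ?_ ?_) <;> simp
    rwa [e] at h

lemma mem_axK {n : ℕ} {S : AddSubgroup (N3 n)} {d : ZMod n} :
    d ∈ axK S ↔ ((d, 0, 0) : N3 n) ∈ S := Iff.rfl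

lemma memcongr {n : ℕ} {S : AddSubgroup (N3 n)} {x y : N3 n} (h : x ∈ S) (e : x = y) :
    y ∈ S := e ▸ h




set_option maxHeartbeats 1000000 in
lemma key2 : ∀ q : ZMod 2 × ZMod 2 × ZMod 2, q.1 + q.2.1 + q.2.2 = 0 → q ≠ 0 →
    ∀ w : ZMod 2 × ZMod 2 × ZMod 2, w.1 + w.2.1 + w.2.2 = 0 →
    ∃ i j : Fin 2, w = i.1 • q + j.1 • (q.2.1, q.2.2, q.1) := by decide

set_option maxHeartbeats 4000000 in
set_option maxRecDepth 40000 in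
lemma key4 : ∀ q : ZMod 4 × ZMod 4 × ZMod 4, q.1 + q.2.1 + q.2.2 = 0 →
    2 * (q.1 + q.2.1 - q.2.2) = 0 → (q.1 = 1 ∨ q.1 = 3) →
    ∀ w : ZMod 4 × ZMod 4 × ZMod 4, w.1 + w.2.1 + w.2.2 = 0 →
    ∃ i j : Fin 4, ∃ k l : Fin 2, w = i.1 • q + j.1 • (q.2.1, q.2.2, q.1)
      + k.1 • ((2, 2, 0) : ZMod 4 × ZMod 4 × ZMod 4)
      + l.1 • ((2, 0, 2) : ZMod 4 × ZMod 4 × ZMod 4) := by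
  intro q h1 h2 h3 w h4
  revert h1 h2 h3 h4
  revert q w
  decide



set_option maxHeartbeats 2000000 in
theorem classify {n : ℕ} [NeZero n] (S : AddSubgroup (N3 n))
    (hr : ∀ x ∈ S, ((x.2.1, x.2.2, x.1) : N3 n) ∈ S)
    (hs : ∀ x ∈ S, ((x.2.1 - x.2.2, x.1 - x.2.2, -x.2.2) : N3 n) ∈ S)
    (a₀ b₀ c₀ : ZMod n) (hx₀S : ((a₀, b₀, c₀) : N3 n) ∈ S)
    (hx₀ : addOrderOf ((a₀, b₀, c₀) : N3 n) = n) :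
    S = ⊤ ∨ (∃ h2 : 2 ∣ n, S = Kd 2 h2) ∨ (∃ h4 : 4 ∣ n, S = Kd 4 h4) := by
  have hrot : ∀ a b c : ZMod n, ((a,b,c) : N3 n) ∈ S → ((b,c,a) : N3 n) ∈ S :=
    fun a b c h => hr _ h
  have hsig : ∀ a b c : ZMod n, ((a,b,c) : N3 n) ∈ S → ((b-c,a-c,-c) : N3 n) ∈ S :=
    fun a b c h => hs _ h
  have P12 : ∀ a b c : ZMod n, ((a,b,c) : N3 n) ∈ S → ((a+b-c, a+b-c, 0) : N3 n) ∈ S := by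
    intro a b c h
    have h2 := S.add_mem h (hsig a b c h)
    rw [tadd] at h2
    exact memcongr h2 (teq (by ring) (by ring) (by ring))
  have A2 : ∀ u : ZMod n, ((u,u,0) : N3 n) ∈ S → ((2*u, 0, 0) : N3 n) ∈ S := by
    intro u h
    have h1 : ((u,0,u) : N3 n) ∈ S := hrot _ _ _ h
    have h2 : ((0,u,u) : N3 n) ∈ S := hrot _ _ _ h1
    have h3 := S.sub_mem (S.add_mem h h1) h2
    rw [tadd, tsub] at h3
    exact memcongr h3 (teq (by ring) (by ring) (by ring))
  have sigK : ∀ a b c : ZMod n, ((a,b,c) : N3 n) ∈ S → (a+b+c) ∈ axK S := by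
    intro a b c h
    have hd := S.add_mem (S.add_mem h (hrot a b c h)) (hrot b c a (hrot a b c h))
    rw [tadd, tadd] at hd
    have hdiag : ((a+b+c, a+b+c, a+b+c) : N3 n) ∈ S :=
      memcongr hd (teq (by ring) (by ring) (by ring))
    have p1 := P12 a b c h
    have p2 := P12 b c a (hrot a b c h)
    have p3 := P12 c a b (hrot b c a (hrot a b c h))
    have hp := S.add_mem (S.add_mem p1 p2) p3
    rw [tadd, tadd] at hp
    have hpair : ((a+b+c, a+b+c, 0) : N3 n) ∈ S :=
      memcongr hp (teq (by ring) (by ring) (by ring))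
    have h0 := S.sub_mem hdiag hpair
    rw [tsub] at h0
    have h0' : ((0, 0, a+b+c) : N3 n) ∈ S := memcongr h0 (teq (by ring) (by ring) (by ring))
    exact hrot _ _ _ (hrot _ _ _ h0')
  have twoK : ∀ a b c : ZMod n, ((a,b,c) : N3 n) ∈ S → (2*(a+b-c)) ∈ axK S :=
    fun a b c h => mem_axK.mpr (A2 _ (P12 a b c h))
  have fourK : ∀ a b c : ZMod n, ((a,b,c) : N3 n) ∈ S → (4*a) ∈ axK S := by
    intro a b c h
    have t1 := twoK a b c h
    have t3 := twoK c a b (hrot b c a (hrot a b c h))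
    have hsum := (axK S).add_mem t1 t3
    have e : 2*(a+b-c) + 2*(c+a-b) = 4*a := by ring
    rwa [e] at hsum
  have haxis3 : ∀ t1 t2 t3 : ZMod n, t1 ∈ axK S → t2 ∈ axK S → t3 ∈ axK S →
      ((t1, t2, t3) : N3 n) ∈ S := by
    intro t1 t2 t3 h1 h2 h3
    have m1 : ((t1,0,0) : N3 n) ∈ S := h1
    have m2 : ((0,t2,0) : N3 n) ∈ S := hrot _ _ _ (hrot _ _ _ h2)
    have m3 : ((0,0,t3) : N3 n) ∈ S := hrot _ _ _ h3
    have hsum := S.add_mem (S.add_mem m1 m2) m3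
    rw [tadd, tadd] at hsum
    exact memcongr hsum (teq (by ring) (by ring) (by ring))
  -- the coordinates of x₀ generate everything
  set Hcl := AddSubgroup.closure ({a₀, b₀, c₀} : Set (ZMod n)) with hHcl
  have ha0 : a₀ ∈ Hcl := AddSubgroup.subset_closure (by simp)
  have hb0 : b₀ ∈ Hcl := AddSubgroup.subset_closure (by simp)
  have hc0 : c₀ ∈ Hcl := AddSubgroup.subset_closure (by simp)
  have hHtop : Hcl = ⊤ := by
    have hcard_dvd : Nat.card Hcl ∣ n := by
      have h := AddSubgroup.card_addSubgroup_dvd_card Hcl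
      rwa [Nat.card_zmod] at h
    have hkill : ∀ t : ZMod n, t ∈ Hcl → (Nat.card Hcl) • t = 0 := by
      intro t ht
      have h1 : (Nat.card Hcl) • (⟨t, ht⟩ : Hcl) = 0 := card_nsmul_eq_zero'
      exact congrArg (fun z : Hcl => (z : ZMod n)) h1
    have hzero : (Nat.card Hcl) • ((a₀, b₀, c₀) : N3 n) = 0 := by
      rw [tsmul]
      exact teq (hkill _ ha0) (hkill _ hb0) (hkill _ hc0)
    have hn_dvd : n ∣ Nat.card Hcl := by
      have h := addOrderOf_dvd_of_nsmul_eq_zero hzero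
      rwa [hx₀] at h
    exact AddSubgroup.eq_top_of_card_eq _
      (by rw [Nat.dvd_antisymm hcard_dvd hn_dvd, Nat.card_zmod])
  have h4K : (4 : ZMod n) ∈ axK S := by
    have hind : ∀ t ∈ Hcl, 4 * t ∈ axK S := by
      intro t ht
      refine AddSubgroup.closure_induction ?_ ?_ ?_ ?_ ht
      · intro x hx
        simp only [Set.mem_insert_iff, Set.mem_singleton_iff] at hx
        rcases hx with h | h | h
        · rw [h]; exact fourK a₀ b₀ c₀ hx₀S
        · rw [h]; exact fourK b₀ c₀ a₀ (hrot _ _ _ hx₀S)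
        · rw [h]; exact fourK c₀ a₀ b₀ (hrot _ _ _ (hrot _ _ _ hx₀S))
      · simpa using (axK S).zero_mem
      · intro x y _ _ px py
        rw [mul_add]
        exact (axK S).add_mem px py
      · intro x _ px
        rw [mul_neg]
        exact (axK S).neg_mem px
    have h := hind 1 (by rw [hHtop]; trivial)
    simpa using h
  have hgcd : ∀ m : ℕ, ((m : ℕ) : ZMod n) ∈ axK S → ((Nat.gcd m n : ℕ) : ZMod n) ∈ axK S := by
    intro m hm
    have hzs := (axK S).zsmul_mem hm (Nat.gcdA m n)
    have e : (Nat.gcdA m n) • ((m : ℕ) : ZMod n) = ((Nat.gcd m n : ℕ) : ZMod n) := by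
      rw [zsmul_eq_mul]
      have hbez := Nat.gcd_eq_gcd_ab m n
      have h2 : ((Nat.gcd m n : ℕ) : ZMod n)
          = ((m : ℕ) : ZMod n) * ((Nat.gcdA m n : ℤ) : ZMod n)
            + ((n : ℕ) : ZMod n) * ((Nat.gcdB m n : ℤ) : ZMod n) := by
        have h3 := congrArg (fun z : ℤ => ((z : ℤ) : ZMod n)) hbez
        push_cast at h3 ⊢
        simpa using h3
      rw [h2, ZMod.natCast_self]
      ring
    rwa [e] at hzs
  by_cases h1K : (1 : ZMod n) ∈ axK S
  · -- S = ⊤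
    left
    rw [eq_top_iff]
    rintro ⟨a, b, c⟩ -
    have hax : ∀ dd : ZMod n, dd ∈ axK S := by
      intro dd
      have h := (axK S).nsmul_mem h1K dd.val
      have e : dd.val • (1 : ZMod n) = dd := by
        rw [nsmul_eq_mul, mul_one]
        exact ZMod.natCast_rightInverse dd
      rwa [e] at h
    exact haxis3 a b c (hax a) (hax b) (hax c)
  by_cases h2K : (2 : ZMod n) ∈ axK S
  · -- index 2 case
    have h2n : 2 ∣ n := by
      have hg := hgcd 2 (by simpa using h2K)
      have hdvd : Nat.gcd 2 n ∣ 2 := Nat.gcd_dvd_left 2 n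
      rcases (Nat.dvd_prime Nat.prime_two).mp hdvd with h | h
      · exfalso
        rw [h] at hg
        simp only [Nat.cast_one] at hg
        exact h1K hg
      · rw [← h]
        exact Nat.gcd_dvd_right 2 n
    refine Or.inr (Or.inl ⟨h2n, ?_⟩)
    set π : ZMod n →+* ZMod 2 := ZMod.castHom h2n (ZMod 2) with hπdef
    have hpi : ∀ t : ZMod n, π t = ((t.val : ℕ) : ZMod 2) := by
      intro t
      rw [hπdef, ZMod.castHom_apply, ← ZMod.natCast_val]
    have hKpi : ∀ t : ZMod n, t ∈ axK S → π t = 0 := by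
      intro t ht
      rcases Nat.mod_two_eq_zero_or_one t.val with h | h
      · obtain ⟨k, hk⟩ : ∃ k, t.val = 2 * k := ⟨t.val / 2, by omega⟩
        rw [hpi, hk]
        exact (ZMod.natCast_eq_zero_iff _ _).mpr ⟨k, rfl⟩
      · exfalso
        obtain ⟨k, hk⟩ : ∃ k, t.val = 2 * k + 1 := ⟨t.val / 2, by omega⟩
        have hsm := (axK S).nsmul_mem h2K k
        have hmem := (axK S).sub_mem ht hsm
        have e : t - k • (2 : ZMod n) = 1 := by
          rw [nsmul_eq_mul]
          conv_lhs => rw [(ZMod.natCast_rightInverse t).symm, hk]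
          push_cast
          ring
        rw [e] at hmem
        exact h1K hmem
    have hpiker : ∀ t : ZMod n, π t = 0 → t ∈ axK S := by
      intro t ht
      rw [hpi] at ht
      obtain ⟨k, hk⟩ := (ZMod.natCast_eq_zero_iff _ _).mp ht
      have hsm := (axK S).nsmul_mem h2K k
      have e : k • (2 : ZMod n) = t := by
        rw [nsmul_eq_mul]
        conv_rhs => rw [(ZMod.natCast_rightInverse t).symm, hk]
        push_cast
        ring
      rwa [e] at hsm
    ext x
    obtain ⟨a, b, c⟩ := x
    rw [mem_Kd]
    constructor
    · intro hxS
      exact hKpi _ (sigK a b c hxS)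
    · intro hsum0
      have hsum : π a + π b + π c = 0 := by
        have h : π (a + b + c) = 0 := hsum0
        rwa [map_add, map_add] at h
      have hq_sum : π a₀ + π b₀ + π c₀ = 0 := by
        have h := hKpi _ (sigK a₀ b₀ c₀ hx₀S)
        rwa [map_add, map_add] at h
      have hq_ne : ((π a₀, π b₀, π c₀) : ZMod 2 × ZMod 2 × ZMod 2) ≠ 0 := by
        intro h0
        have h1' : π a₀ = 0 := congrArg Prod.fst h0
        have h2' : π b₀ = 0 := congrArg (fun p => p.2.1) h0
        have h3' : π c₀ = 0 := congrArg (fun p => p.2.2) h0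
        have hall : ∀ t ∈ Hcl, π t = 0 := by
          intro t ht
          refine AddSubgroup.closure_induction ?_ ?_ ?_ ?_ ht
          · intro z hz
            simp only [Set.mem_insert_iff, Set.mem_singleton_iff] at hz
            rcases hz with h | h | h <;> rw [h] <;> assumption
          · simp
          · intro z w _ _ pz pw
            rw [map_add, pz, pw, add_zero]
          · intro z _ pz
            rw [map_neg, pz, neg_zero]
        have h1t := hall 1 (by rw [hHtop]; trivial)
        rw [map_one] at h1t
        exact one_ne_zero h1t
      obtain ⟨i, j, hij⟩ := key2 (π a₀, π b₀, π c₀) hq_sum hq_ne (π a, π b, π c) hsum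
      have e1 : π a = (i.1 : ZMod 2) * π a₀ + (j.1 : ZMod 2) * π b₀ := by
        have h := congrArg Prod.fst hij
        simpa [nsmul_eq_mul] using h
      have e2 : π b = (i.1 : ZMod 2) * π b₀ + (j.1 : ZMod 2) * π c₀ := by
        have h := congrArg (fun p : ZMod 2 × ZMod 2 × ZMod 2 => p.2.1) hij
        simpa [nsmul_eq_mul] using h
      have e3 : π c = (i.1 : ZMod 2) * π c₀ + (j.1 : ZMod 2) * π a₀ := by
        have h := congrArg (fun p : ZMod 2 × ZMod 2 × ZMod 2 => p.2.2) hij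
        simpa [nsmul_eq_mul] using h
      have hyS : (((i.1 : ZMod n) * a₀ + (j.1 : ZMod n) * b₀,
                   (i.1 : ZMod n) * b₀ + (j.1 : ZMod n) * c₀,
                   (i.1 : ZMod n) * c₀ + (j.1 : ZMod n) * a₀) : N3 n) ∈ S := by
        have hm1 := S.nsmul_mem hx₀S i.1
        have hm2 := S.nsmul_mem (hrot a₀ b₀ c₀ hx₀S) j.1
        have hadd := S.add_mem hm1 hm2
        rw [tsmul, tsmul, tadd] at hadd
        exact memcongr hadd
          (teq (by simp [nsmul_eq_mul]) (by simp [nsmul_eq_mul]) (by simp [nsmul_eq_mul]))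
      have hrem : ∀ t s : ZMod n, π t = π s → (t - s) ∈ axK S := by
        intro t s hts
        apply hpiker
        rw [map_sub, hts, sub_self]
      have ht1 : (a - ((i.1 : ZMod n) * a₀ + (j.1 : ZMod n) * b₀)) ∈ axK S := by
        apply hrem
        rw [map_add, map_mul, map_mul, map_natCast, map_natCast]
        exact e1
      have ht2 : (b - ((i.1 : ZMod n) * b₀ + (j.1 : ZMod n) * c₀)) ∈ axK S := by
        apply hrem
        rw [map_add, map_mul, map_mul, map_natCast, map_natCast]
        exact e2
      have ht3 : (c - ((i.1 : ZMod n) * c₀ + (j.1 : ZMod n) * a₀)) ∈ axK S := by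
        apply hrem
        rw [map_add, map_mul, map_mul, map_natCast, map_natCast]
        exact e3
      have hsum3 := haxis3 _ _ _ ht1 ht2 ht3
      have hfin := S.add_mem hyS hsum3
      rw [tadd] at hfin
      exact memcongr hfin (teq (by ring) (by ring) (by ring))
  · -- index 4 case
    have h4n : 4 ∣ n := by
      have hg := hgcd 4 (by simpa using h4K)
      have hdvd : Nat.gcd 4 n ∣ 4 := Nat.gcd_dvd_left 4 n
      have hpos : 0 < Nat.gcd 4 n := Nat.gcd_pos_of_pos_left n (by norm_num)
      have hle : Nat.gcd 4 n ≤ 4 := Nat.le_of_dvd (by norm_num) hdvd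
      have h124 : Nat.gcd 4 n = 1 ∨ Nat.gcd 4 n = 2 ∨ Nat.gcd 4 n = 4 := by
        interval_cases h : (Nat.gcd 4 n) <;> omega
      rcases h124 with h | h | h
      · exfalso
        rw [h] at hg
        simp only [Nat.cast_one] at hg
        exact h1K hg
      · exfalso
        rw [h] at hg
        simp only [Nat.cast_ofNat] at hg
        exact h2K hg
      · rw [← h]
        exact Nat.gcd_dvd_right 4 n
    refine Or.inr (Or.inr ⟨h4n, ?_⟩)
    set π : ZMod n →+* ZMod 4 := ZMod.castHom h4n (ZMod 4) with hπdef
    have hpi : ∀ t : ZMod n, π t = ((t.val : ℕ) : ZMod 4) := by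
      intro t
      rw [hπdef, ZMod.castHom_apply, ← ZMod.natCast_val]
    have hmul4 : ∀ k : ℕ, k • (4 : ZMod n) ∈ axK S := fun k => (axK S).nsmul_mem h4K k
    have hKpi : ∀ t : ZMod n, t ∈ axK S → π t = 0 := by
      intro t ht
      have hmod : t.val % 4 = 0 ∨ t.val % 4 = 1 ∨ t.val % 4 = 2 ∨ t.val % 4 = 3 := by omega
      have hsub : ∀ r k : ℕ, t.val = 4 * k + r → ((r : ℕ) : ZMod n) ∈ axK S := by
        intro r k hr2
        have hmem := (axK S).sub_mem ht (hmul4 k)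
        have e : t - k • (4 : ZMod n) = ((r : ℕ) : ZMod n) := by
          rw [nsmul_eq_mul]
          conv_lhs => rw [(ZMod.natCast_rightInverse t).symm, hr2]
          push_cast
          ring
        rwa [e] at hmem
      rcases hmod with h | h | h | h
      · obtain ⟨k, hk⟩ : ∃ k, t.val = 4 * k := ⟨t.val / 4, by omega⟩
        rw [hpi, hk]
        exact (ZMod.natCast_eq_zero_iff _ _).mpr ⟨k, rfl⟩
      · exfalso
        have h1 := hsub 1 (t.val / 4) (by omega)
        simp only [Nat.cast_one] at h1
        exact h1K h1
      · exfalso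
        have h1 := hsub 2 (t.val / 4) (by omega)
        simp only [Nat.cast_ofNat] at h1
        exact h2K h1
      · exfalso
        have h3 := hsub 3 (t.val / 4) (by omega)
        have h1 : (1 : ZMod n) ∈ axK S := by
          have hmem := (axK S).sub_mem h4K h3
          have e : (4 : ZMod n) - ((3 : ℕ) : ZMod n) = 1 := by
            push_cast
            ring
          rwa [e] at hmem
        exact h1K h1
    have hpiker : ∀ t : ZMod n, π t = 0 → t ∈ axK S := by
      intro t ht
      rw [hpi] at ht
      obtain ⟨k, hk⟩ := (ZMod.natCast_eq_zero_iff _ _).mp ht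
      have hsm := hmul4 k
      have e : k • (4 : ZMod n) = t := by
        rw [nsmul_eq_mul]
        conv_rhs => rw [(ZMod.natCast_rightInverse t).symm, hk]
        push_cast
        ring
      rwa [e] at hsm
    have hmain : ∀ a1 b1 c1 : ZMod n, ((a1,b1,c1) : N3 n) ∈ S → (π a1 = 1 ∨ π a1 = 3) →
        ∀ a b c : ZMod n, π a + π b + π c = 0 → ((a,b,c) : N3 n) ∈ S := by
      intro a1 b1 c1 h1 hodd a b c hsum
      have hq_sum : π a1 + π b1 + π c1 = 0 := by
        have h := hKpi _ (sigK a1 b1 c1 h1)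
        rwa [map_add, map_add] at h
      have hq2 : 2 * (π a1 + π b1 - π c1) = 0 := by
        have h := hKpi _ (twoK a1 b1 c1 h1)
        rw [map_mul, map_sub, map_add] at h
        rwa [show π 2 = 2 from map_ofNat π 2] at h
      have hg1 : ((2*a1, 2*a1, 0) : N3 n) ∈ S := by
        have p1 := P12 a1 b1 c1 h1
        have p3 := P12 c1 a1 b1 (hrot _ _ _ (hrot _ _ _ h1))
        have hadd := S.add_mem p1 p3
        rw [tadd] at hadd
        exact memcongr hadd (teq (by ring) (by ring) (by ring))
      have hg2 : ((2*a1, 0, 2*a1) : N3 n) ∈ S := by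
        have h' := hrot _ _ _ hg1
        exact h'
      have himg : π (2*a1) = 2 := by
        rw [map_mul, show π 2 = 2 from map_ofNat π 2]
        rcases hodd with h | h <;> rw [h] <;> decide
      obtain ⟨i, j, k, l, hw⟩ := key4 (π a1, π b1, π c1) hq_sum hq2 hodd (π a, π b, π c) hsum
      have e1 : π a = (i.1 : ZMod 4) * π a1 + (j.1 : ZMod 4) * π b1
          + (k.1 : ZMod 4) * 2 + (l.1 : ZMod 4) * 2 := by
        have h := congrArg Prod.fst hw
        simpa [nsmul_eq_mul] using h
      have e2 : π b = (i.1 : ZMod 4) * π b1 + (j.1 : ZMod 4) * π c1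
          + (k.1 : ZMod 4) * 2 + (l.1 : ZMod 4) * 0 := by
        have h := congrArg (fun p : ZMod 4 × ZMod 4 × ZMod 4 => p.2.1) hw
        simpa [nsmul_eq_mul] using h
      have e3 : π c = (i.1 : ZMod 4) * π c1 + (j.1 : ZMod 4) * π a1
          + (k.1 : ZMod 4) * 0 + (l.1 : ZMod 4) * 2 := by
        have h := congrArg (fun p : ZMod 4 × ZMod 4 × ZMod 4 => p.2.2) hw
        simpa [nsmul_eq_mul] using h
      have hyS : (((i.1 : ZMod n) * a1 + (j.1 : ZMod n) * b1
                      + (k.1 : ZMod n) * (2*a1) + (l.1 : ZMod n) * (2*a1),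
                   (i.1 : ZMod n) * b1 + (j.1 : ZMod n) * c1
                      + (k.1 : ZMod n) * (2*a1) + (l.1 : ZMod n) * 0,
                   (i.1 : ZMod n) * c1 + (j.1 : ZMod n) * a1
                      + (k.1 : ZMod n) * 0 + (l.1 : ZMod n) * (2*a1)) : N3 n) ∈ S := by
        have hm1 := S.nsmul_mem h1 i.1
        have hm2 := S.nsmul_mem (hrot a1 b1 c1 h1) j.1
        have hm3 := S.nsmul_mem hg1 k.1
        have hm4 := S.nsmul_mem hg2 l.1
        have hadd := S.add_mem (S.add_mem (S.add_mem hm1 hm2) hm3) hm4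
        rw [tsmul, tsmul, tsmul, tsmul, tadd, tadd, tadd] at hadd
        exact memcongr hadd
          (teq (by simp [nsmul_eq_mul]) (by simp [nsmul_eq_mul]) (by simp [nsmul_eq_mul]))
      have hrem : ∀ t s : ZMod n, π t = π s → (t - s) ∈ axK S := by
        intro t s hts
        apply hpiker
        rw [map_sub, hts, sub_self]
      have h2a : (2 : ZMod 4) * π a1 = 2 := by
        rcases hodd with hh | hh <;> rw [hh] <;> decide
      have ht1 : (a - ((i.1 : ZMod n) * a1 + (j.1 : ZMod n) * b1
          + (k.1 : ZMod n) * (2*a1) + (l.1 : ZMod n) * (2*a1))) ∈ axK S := by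
        apply hrem
        simp only [map_add, map_mul, map_natCast, map_ofNat, map_zero, h2a]
        linear_combination e1
      have ht2 : (b - ((i.1 : ZMod n) * b1 + (j.1 : ZMod n) * c1
          + (k.1 : ZMod n) * (2*a1) + (l.1 : ZMod n) * 0)) ∈ axK S := by
        apply hrem
        simp only [map_add, map_mul, map_natCast, map_ofNat, map_zero, h2a]
        linear_combination e2
      have ht3 : (c - ((i.1 : ZMod n) * c1 + (j.1 : ZMod n) * a1
          + (k.1 : ZMod n) * 0 + (l.1 : ZMod n) * (2*a1))) ∈ axK S := by
        apply hrem
        simp only [map_add, map_mul, map_natCast, map_ofNat, map_zero, h2a]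
        linear_combination e3
      have hsum3 := haxis3 _ _ _ ht1 ht2 ht3
      have hfin := S.add_mem hyS hsum3
      rw [tadd] at hfin
      exact memcongr hfin (teq (by ring) (by ring) (by ring))
    have hz4 : ∀ z : ZMod 4, z = 0 ∨ z = 1 ∨ z = 2 ∨ z = 3 := by decide
    have hodd : (π a₀ = 1 ∨ π a₀ = 3) ∨ (π b₀ = 1 ∨ π b₀ = 3) ∨ (π c₀ = 1 ∨ π c₀ = 3) := by
      by_contra hcon
      push_neg at hcon
      obtain ⟨⟨hna1, hna3⟩, ⟨hnb1, hnb3⟩, ⟨hnc1, hnc3⟩⟩ := hcon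
      have hEa : π a₀ = 0 ∨ π a₀ = 2 := by rcases hz4 (π a₀) with h|h|h|h <;> tauto
      have hEb : π b₀ = 0 ∨ π b₀ = 2 := by rcases hz4 (π b₀) with h|h|h|h <;> tauto
      have hEc : π c₀ = 0 ∨ π c₀ = 2 := by rcases hz4 (π c₀) with h|h|h|h <;> tauto
      have hall : ∀ t ∈ Hcl, π t = 0 ∨ π t = 2 := by
        intro t ht
        refine AddSubgroup.closure_induction ?_ ?_ ?_ ?_ ht
        · intro z hz
          simp only [Set.mem_insert_iff, Set.mem_singleton_iff] at hz
          rcases hz with h | h | h <;> rw [h] <;> assumption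
        · left; simp
        · intro z w _ _ pz pw
          rw [map_add]
          rcases pz with h|h <;> rcases pw with h'|h' <;> rw [h, h'] <;> decide
        · intro z _ pz
          rw [map_neg]
          rcases pz with h|h <;> rw [h] <;> decide
      have h1t := hall 1 (by rw [hHtop]; trivial)
      rw [map_one] at h1t
      rcases h1t with h|h <;> exact absurd h (by decide)
    ext x
    obtain ⟨a, b, c⟩ := x
    rw [mem_Kd]
    constructor
    · intro hxS
      exact hKpi _ (sigK a b c hxS)
    · intro hsum0
      have hsum : π a + π b + π c = 0 := by
        have h : π (a + b + c) = 0 := hsum0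
        rwa [map_add, map_add] at h
      rcases hodd with h | h | h
      · exact hmain a₀ b₀ c₀ hx₀S h a b c hsum
      · exact hmain b₀ c₀ a₀ (hrot _ _ _ hx₀S) h a b c hsum
      · exact hmain c₀ a₀ b₀ (hrot _ _ _ (hrot _ _ _ hx₀S)) h a b c hsum



def multProd {α β : Type*} [AddZeroClass α] [AddZeroClass β] :
    Multiplicative (α × β) ≃* Multiplicative α × Multiplicative β where
  toFun z := (Multiplicative.ofAdd (Multiplicative.toAdd z).1,
              Multiplicative.ofAdd (Multiplicative.toAdd z).2)
  invFun p := Multiplicative.ofAdd (Multiplicative.toAdd p.1, Multiplicative.toAdd p.2)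
  left_inv _ := rfl
  right_inv _ := rfl
  map_mul' _ _ := rfl

def mul3 {n : ℕ} : Multiplicative (N3 n) ≃*
    (Multiplicative (ZMod n) × Multiplicative (ZMod n) × Multiplicative (ZMod n)) :=
  multProd.trans (MulEquiv.prodCongr (MulEquiv.refl _) multProd)


end Statement1Aux


open Statement1Aux in
theorem statement1 (T : Subgroup G3) (hfin : Finite ↥T)
    (hrho : Subgroup.map rhoHom T = T) (hvarsigma : Subgroup.map varsigmaHom T = T)
    (n : ℕ) (hn1 : 1 ≤ n) (hn : n = Monoid.exponent ↥T) :
    T = muCube n ∨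
      (Even n ∧ Nonempty (↥T ≃*
        Multiplicative (ZMod n) × Multiplicative (ZMod n) × Multiplicative (ZMod (n / 2)))) ∨
      (4 ∣ n ∧ Nonempty (↥T ≃*
        Multiplicative (ZMod n) × Multiplicative (ZMod n) × Multiplicative (ZMod (n / 4)))) := by
  haveI : NeZero n := ⟨by omega⟩
  have hn0 : n ≠ 0 := by omega
  have hTn : ∀ x : G3, x ∈ T → x ^ n = 1 := by
    intro x hx
    have h1 : (⟨x, hx⟩ : T) ^ n = 1 := by
      rw [hn]; exact Monoid.pow_exponent_eq_one _
    have h2 := congrArg (fun z : T => (z : G3)) h1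
    simpa using h2
  set ζ : ℂ := Complex.exp (2 * Real.pi * Complex.I / n) with hζdef
  have hζ : IsPrimitiveRoot ζ n := Complex.isPrimitiveRoot_exp n hn0
  have hζu : IsUnit ζ := hζ.isUnit hn0
  set ζu : ℂˣ := hζu.unit with hζudef
  have hζuval : (ζu : ℂ) = ζ := hζu.unit_spec
  have hζun : ζu ^ n = 1 := by
    apply Units.ext
    rw [Units.val_pow_eq_pow_val, hζuval, Units.val_one]
    exact hζ.pow_eq_one
  set χ' : ZMod n →+ Additive ℂˣ :=
    ZMod.lift n ⟨(zmultiplesHom (Additive ℂˣ)) (Additive.ofMul ζu), by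
      simp only [zmultiplesHom_apply, natCast_zsmul, ← ofMul_pow, hζun, ofMul_one]⟩ with hχ'def
  have hχ'app : ∀ m : ℕ, χ' ((m : ℕ) : ZMod n) = Additive.ofMul (ζu ^ m) := by
    intro m
    have h1 : ((m : ℤ) : ZMod n) = ((m : ℕ) : ZMod n) := by push_cast; rfl
    rw [← h1, hχ'def, ZMod.lift_coe]
    simp only [zmultiplesHom_apply, natCast_zsmul, ← ofMul_pow]
  set χ : Multiplicative (ZMod n) →* ℂˣ := AddMonoidHom.toMultiplicativeLeft χ' with hχdef
  have hχapp : ∀ m : ℕ, χ (Multiplicative.ofAdd ((m : ℕ) : ZMod n)) = ζu ^ m := by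
    intro m
    show Additive.toMul (χ' ((m : ℕ) : ZMod n)) = ζu ^ m
    rw [hχ'app]
    rfl
  have hχinj : Function.Injective χ := by
    rw [injective_iff_map_eq_one]
    intro k hk
    have hv : ((Multiplicative.toAdd k).val : ZMod n) = Multiplicative.toAdd k :=
      ZMod.natCast_rightInverse _
    have h1 : χ (Multiplicative.ofAdd (((Multiplicative.toAdd k).val : ℕ) : ZMod n)) = 1 := by
      rw [hv]
      exact hk
    rw [hχapp] at h1
    have h2 : (ζ : ℂ) ^ (Multiplicative.toAdd k).val = 1 := by
      have h3 := congrArg (fun u : ℂˣ => (u : ℂ)) h1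
      simpa [hζuval] using h3
    have h3 : n ∣ (Multiplicative.toAdd k).val := (hζ.pow_eq_one_iff_dvd _).mp h2
    have h4 : Multiplicative.toAdd k = 0 := by
      rw [← hv]
      exact (ZMod.natCast_eq_zero_iff _ _).mpr h3
    calc k = Multiplicative.ofAdd (Multiplicative.toAdd k) := rfl
    _ = Multiplicative.ofAdd 0 := by rw [h4]
    _ = 1 := rfl
  have hχsurj : ∀ x : ℂˣ, x ^ n = 1 → ∃ k, χ k = x := by
    intro x hxn
    have hx : (x : ℂ) ^ n = 1 := by
      have h3 := congrArg (fun u : ℂˣ => (u : ℂ)) hxn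
      simpa using h3
    obtain ⟨i, _, hieq⟩ := hζ.eq_pow_of_pow_eq_one hx
    refine ⟨Multiplicative.ofAdd ((i : ℕ) : ZMod n), ?_⟩
    rw [hχapp]
    apply Units.ext
    rw [Units.val_pow_eq_pow_val, hζuval]
    exact hieq
  set Φ : (Multiplicative (ZMod n) × Multiplicative (ZMod n) × Multiplicative (ZMod n)) →* G3 :=
    χ.prodMap (χ.prodMap χ) with hΦdef
  have hΦapp : ∀ p, Φ p = (χ p.1, χ p.2.1, χ p.2.2) := fun p => rfl
  have hΦinj : Function.Injective Φ := by
    rw [hΦdef]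
    show Function.Injective (Prod.map χ (Prod.map χ χ))
    exact hχinj.prodMap (hχinj.prodMap hχinj)
  have hTrange : T ≤ Φ.range := by
    intro x hx
    have hpow := hTn x hx
    have h1 : x.1 ^ n = 1 := congrArg Prod.fst hpow
    have h2 : x.2.1 ^ n = 1 := congrArg (fun z : G3 => z.2.1) hpow
    have h3 : x.2.2 ^ n = 1 := congrArg (fun z : G3 => z.2.2) hpow
    obtain ⟨k1, hk1⟩ := hχsurj _ h1
    obtain ⟨k2, hk2⟩ := hχsurj _ h2
    obtain ⟨k3, hk3⟩ := hχsurj _ h3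
    exact ⟨(k1, k2, k3), by rw [hΦapp]; exact Prod.ext hk1 (Prod.ext hk2 hk3)⟩
  set Sg : Subgroup _ := T.comap Φ with hSgdef
  have hmap : Subgroup.map Φ Sg = T := Subgroup.map_comap_eq_self hTrange
  have eST : (↥Sg ≃* ↥T) :=
    (Subgroup.equivMapOfInjective Sg Φ hΦinj).trans (MulEquiv.subgroupCongr hmap)
  set S : AddSubgroup (N3 n) :=
    { carrier := {x : N3 n | ((Multiplicative.ofAdd x.1, Multiplicative.ofAdd x.2.1,
        Multiplicative.ofAdd x.2.2) : Multiplicative (ZMod n) × Multiplicative (ZMod n) ×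
        Multiplicative (ZMod n)) ∈ Sg}
      zero_mem' := Sg.one_mem
      add_mem' := fun hx hy => Sg.mul_mem hx hy
      neg_mem' := fun hx => Sg.inv_mem hx } with hSdef
  have hrS : ∀ x ∈ S, ((x.2.1, x.2.2, x.1) : N3 n) ∈ S := by
    intro x hx
    have hp : Φ (Multiplicative.ofAdd x.1, Multiplicative.ofAdd x.2.1,
        Multiplicative.ofAdd x.2.2) ∈ T := hx
    have h2 : rhoHom (Φ (Multiplicative.ofAdd x.1, Multiplicative.ofAdd x.2.1,
        Multiplicative.ofAdd x.2.2)) ∈ Subgroup.map rhoHom T := ⟨_, hp, rfl⟩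
    rw [hrho] at h2
    exact h2
  have hsS : ∀ x ∈ S, ((x.2.1 - x.2.2, x.1 - x.2.2, -x.2.2) : N3 n) ∈ S := by
    intro x hx
    have hp : Φ (Multiplicative.ofAdd x.1, Multiplicative.ofAdd x.2.1,
        Multiplicative.ofAdd x.2.2) ∈ T := hx
    have h2 : varsigmaHom (Φ (Multiplicative.ofAdd x.1, Multiplicative.ofAdd x.2.1,
        Multiplicative.ofAdd x.2.2)) ∈ Subgroup.map varsigmaHom T := ⟨_, hp, rfl⟩
    rw [hvarsigma] at h2
    have he : varsigmaHom (Φ (Multiplicative.ofAdd x.1, Multiplicative.ofAdd x.2.1,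
        Multiplicative.ofAdd x.2.2))
        = Φ (Multiplicative.ofAdd (x.2.1 - x.2.2), Multiplicative.ofAdd (x.1 - x.2.2),
            Multiplicative.ofAdd (-x.2.2)) := by
      rw [hΦapp, hΦapp]
      refine Prod.ext ?_ (Prod.ext ?_ ?_)
      · show χ (Multiplicative.ofAdd x.2.1) / χ (Multiplicative.ofAdd x.2.2)
          = χ (Multiplicative.ofAdd (x.2.1 - x.2.2))
        rw [ofAdd_sub, map_div]
      · show χ (Multiplicative.ofAdd x.1) / χ (Multiplicative.ofAdd x.2.2)
          = χ (Multiplicative.ofAdd (x.1 - x.2.2))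
        rw [ofAdd_sub, map_div]
      · show (χ (Multiplicative.ofAdd x.2.2))⁻¹ = χ (Multiplicative.ofAdd (-x.2.2))
        rw [ofAdd_neg, map_inv]
    rw [he] at h2
    exact h2
  have hexp : Monoid.exponent ↥Sg = Monoid.exponent ↥T := Monoid.exponent_eq_of_mulEquiv eST
  rw [← hn] at hexp
  obtain ⟨g, hg⟩ := Monoid.exists_orderOf_eq_exponent
    (Monoid.exponent_ne_zero.mp (by rw [hexp]; omega) : Monoid.ExponentExists ↥Sg)
  have hgn : orderOf g = n := by rw [hg, hexp]
  have hordp : orderOf (g : Multiplicative (ZMod n) × Multiplicative (ZMod n) ×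
      Multiplicative (ZMod n)) = n := by
    rw [Subgroup.orderOf_coe]
    exact hgn
  set p₀ := (g : Multiplicative (ZMod n) × Multiplicative (ZMod n) ×
      Multiplicative (ZMod n)) with hp₀def
  set x₀ : N3 n := (Multiplicative.toAdd p₀.1, Multiplicative.toAdd p₀.2.1,
      Multiplicative.toAdd p₀.2.2) with hx₀def
  have hx₀S : x₀ ∈ S := g.2
  have hx₀ord : addOrderOf x₀ = n := by
    have hinj3 : Function.Injective (mul3.toMonoidHom :
        Multiplicative (N3 n) →* Multiplicative (ZMod n) × Multiplicative (ZMod n) ×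
        Multiplicative (ZMod n)) := mul3.injective
    have h2 : orderOf (mul3.toMonoidHom (Multiplicative.ofAdd x₀)) = n := hordp
    rw [orderOf_injective (mul3 (n := n)).toMonoidHom hinj3] at h2
    rwa [orderOf_ofAdd_eq_addOrderOf] at h2
  rcases classify S hrS hsS x₀.1 x₀.2.1 x₀.2.2 hx₀S hx₀ord with hTop | ⟨h2, hS2⟩ | ⟨h4, hS4⟩
  · left
    ext x
    constructor
    · intro hx
      have h := hTn x hx
      exact ⟨congrArg Prod.fst h, congrArg (fun z : G3 => z.2.1) h,
        congrArg (fun z : G3 => z.2.2) h⟩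
    · rintro ⟨h1, h2, h3⟩
      obtain ⟨k1, hk1⟩ := hχsurj _ h1
      obtain ⟨k2, hk2⟩ := hχsurj _ h2
      obtain ⟨k3, hk3⟩ := hχsurj _ h3
      have hmem : ((Multiplicative.toAdd k1, Multiplicative.toAdd k2,
          Multiplicative.toAdd k3) : N3 n) ∈ S := by rw [hTop]; trivial
      have hmem2 : Φ (k1, k2, k3) ∈ T := hmem
      have hx' : Φ (k1, k2, k3) = x := by
        rw [hΦapp]; exact Prod.ext hk1 (Prod.ext hk2 hk3)
      rwa [hx'] at hmem2
  · refine Or.inr (Or.inl ⟨⟨n/2, by omega⟩, ?_⟩)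
    obtain ⟨E⟩ := equivKd 2 h2 (by norm_num)
    have e2 : (↥Sg ≃* Multiplicative ↥S) :=
      { toFun := fun s => Multiplicative.ofAdd
          ⟨((Multiplicative.toAdd (s : Multiplicative (ZMod n) × Multiplicative (ZMod n) ×
             Multiplicative (ZMod n)).1, Multiplicative.toAdd (s : Multiplicative (ZMod n) ×
             Multiplicative (ZMod n) × Multiplicative (ZMod n)).2.1,
             Multiplicative.toAdd (s : Multiplicative (ZMod n) × Multiplicative (ZMod n) ×
             Multiplicative (ZMod n)).2.2) : N3 n), s.2⟩
        invFun := fun m => ⟨(Multiplicative.ofAdd ((Multiplicative.toAdd m : ↥S) : N3 n).1,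
            Multiplicative.ofAdd ((Multiplicative.toAdd m : ↥S) : N3 n).2.1,
            Multiplicative.ofAdd ((Multiplicative.toAdd m : ↥S) : N3 n).2.2),
            (Multiplicative.toAdd m).2⟩
        left_inv := fun _ => rfl
        right_inv := fun _ => rfl
        map_mul' := fun _ _ => rfl }
    exact ⟨eST.symm.trans (e2.trans ((AddEquiv.toMultiplicative
      (AddEquiv.addSubgroupCongr hS2)).trans ((AddEquiv.toMultiplicative E.symm).trans
      (multProd.trans (MulEquiv.prodCongr (MulEquiv.refl _) multProd)))))⟩
  · refine Or.inr (Or.inr ⟨h4, ?_⟩)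
    obtain ⟨E⟩ := equivKd 4 h4 (by norm_num)
    have e2 : (↥Sg ≃* Multiplicative ↥S) :=
      { toFun := fun s => Multiplicative.ofAdd
          ⟨((Multiplicative.toAdd (s : Multiplicative (ZMod n) × Multiplicative (ZMod n) ×
             Multiplicative (ZMod n)).1, Multiplicative.toAdd (s : Multiplicative (ZMod n) ×
             Multiplicative (ZMod n) × Multiplicative (ZMod n)).2.1,
             Multiplicative.toAdd (s : Multiplicative (ZMod n) × Multiplicative (ZMod n) ×
             Multiplicative (ZMod n)).2.2) : N3 n), s.2⟩
        invFun := fun m => ⟨(Multiplicative.ofAdd ((Multiplicative.toAdd m : ↥S) : N3 n).1,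
            Multiplicative.ofAdd ((Multiplicative.toAdd m : ↥S) : N3 n).2.1,
            Multiplicative.ofAdd ((Multiplicative.toAdd m : ↥S) : N3 n).2.2),
            (Multiplicative.toAdd m).2⟩
        left_inv := fun _ => rfl
        right_inv := fun _ => rfl
        map_mul' := fun _ _ => rfl }
    exact ⟨eST.symm.trans (e2.trans ((AddEquiv.toMultiplicative
      (AddEquiv.addSubgroupCongr hS4)).trans ((AddEquiv.toMultiplicative E.symm).trans
      (multProd.trans (MulEquiv.prodCongr (MulEquiv.refl _) multProd)))))⟩

end
end

section
/- For (a,b,c) ∈ ℂ³ with (a,b,c) ≠ (0,0,0), set q_{a,b,c} = a·x₀x₁x₂x₃ + b·Σ_{0≤i<j≤3} xᵢ²xⱼ² + c·(x₀⁴+x₁⁴+x₂⁴+x₃⁴) ∈ ℂ[x₀,x₁,x₂,x₃]. Then there exists a nonzero vector (x₀,x₁,x₂,x₃) ∈ ℂ⁴ at which all four partial derivatives ∂q_{a,b,c}/∂x₀, ∂q_{a,b,c}/∂x₁, ∂q_{a,b,c}/∂x₂, ∂q_{a,b,c}/∂x₃ vanish simultaneously (i.e., the quartic surface {q_{a,b,c}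 = 0} ⊂ ℙ³(ℂ) is singular) if and only if c·(b+2c)·(b−2c)·(a+2b−4c)·(a−2b+4c)·(a−6b−4c)·(a+6b+4c)·(a²c + 4b³ − 12b²c + 16c³) = 0. -/
open MvPolynomial

noncomputable section

/-- The quartic form
`a·x₀x₁x₂x₃ + b·Σ_{i<j} xᵢ²xⱼ² + c·(x₀⁴+x₁⁴+x₂⁴+x₃⁴)`. -/
def quartic (a b c : ℂ) : MvPolynomial (Fin 4) ℂ :=
  C a * (X 0 * X 1 * X 2 * X 3) +
    C b * (X 0 ^ 2 * X 1 ^ 2 + X 0 ^ 2 * X 2 ^ 2 + X 0 ^ 2 * X 3 ^ 2 +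
      X 1 ^ 2 * X 2 ^ 2 + X 1 ^ 2 * X 3 ^ 2 + X 2 ^ 2 * X 3 ^ 2) +
    C c * (X 0 ^ 4 + X 1 ^ 4 + X 2 ^ 4 + X 3 ^ 4)

namespace St17


/-- all squares equal case -/
lemma keyA (a b c x0 x1 x2 x3 : ℂ) (hx0 : x0 ≠ 0)
    (h0 : a*(x1*x2*x3) + 2*b*x0*(x1^2+x2^2+x3^2) + 4*c*x0^3 = 0)
    (hu1 : x1^2 = x0^2) (hu2 : x2^2 = x0^2) (hu3 : x3^2 = x0^2) :
    (a - 6*b - 4*c) * (a + 6*b + 4*c) = 0 := by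
  have hT : a*(x0*x1*x2*x3) + (6*b+4*c)*x0^4 = 0 := by
    linear_combination x0*h0 - 2*b*x0^2*(hu1 + hu2 + hu3)
  have hPi : (x0*x1*x2*x3)^2 = x0^8 := by
    have : (x0*x1*x2*x3)^2 = x0^2*x1^2*x2^2*x3^2 := by ring
    rw [this, hu1, hu2, hu3]; ring
  have hkey : (a - 6*b - 4*c) * (a + 6*b + 4*c) * x0^8 = 0 := by
    linear_combination (a*(x0*x1*x2*x3) - (6*b+4*c)*x0^4)*hT - a^2*hPi
  have h8 : x0^8 ≠ 0 := pow_ne_zero _ hx0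
  exact (mul_eq_zero.mp hkey).resolve_right h8

/-- 2+2 case: x0²=x1² ≠ x2²=x3² -/
lemma keyB (a b c x0 x1 x2 x3 : ℂ)
    (h0 : a*(x1*x2*x3) + 2*b*x0*(x1^2+x2^2+x3^2) + 4*c*x0^3 = 0)
    (h2 : a*(x0*x1*x3) + 2*b*x2*(x0^2+x1^2+x3^2) + 4*c*x2^3 = 0)
    (hu1 : x1^2 = x0^2) (hu3 : x3^2 = x2^2) (hne : x2^2 ≠ x0^2) :
    (b + 2*c) = 0 ∨ (a + 2*b - 4*c) * (a - 2*b + 4*c) = 0 := by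
  have E02 : (x0^2 - x2^2) * (2*b*(x0^2+x1^2+x2^2+x3^2) - (2*b-4*c)*(x0^2+x2^2)) = 0 := by
    linear_combination x0*h0 - x2*h2
  have hd : x0^2 - x2^2 ≠ 0 := sub_ne_zero.mpr (Ne.symm hne)
  have rel : 2*b*(x0^2+x1^2+x2^2+x3^2) - (2*b-4*c)*(x0^2+x2^2) = 0 :=
    (mul_eq_zero.mp E02).resolve_left hd
  have h2c : (b + 2*c) * (x0^2 + x2^2) = 0 := by
    linear_combination (1/2)*rel - b*hu1 - b*hu3
  rcases mul_eq_zero.mp h2c with h | hw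
  · exact Or.inl h
  · right
    have hw' : x2^2 = -x0^2 := by linear_combination hw
    have hx0 : x0 ≠ 0 := by
      intro h; apply hne; rw [h] at hw' ⊢; simpa using hw'
    have hT : a*(x0*x1*x2*x3) - (2*b-4*c)*x0^4 = 0 := by
      linear_combination x0*h0 - 2*b*x0^2*(hu1 + hu3 + 2*hw')
    have hPi : (x0*x1*x2*x3)^2 = x0^8 := by
      have : (x0*x1*x2*x3)^2 = x0^2*x1^2*x2^2*x3^2 := by ring
      rw [this, hu1, hu3, hw']; ring
    have hkey : (a + 2*b - 4*c) * (a - 2*b + 4*c) * x0^8 = 0 := by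
      linear_combination (a*(x0*x1*x2*x3) + (2*b-4*c)*x0^4)*hT - a^2*hPi
    exact (mul_eq_zero.mp hkey).resolve_right (pow_ne_zero _ hx0)

/-- 3+1 case: x0²=x1²=x2² ≠ x3² -/
lemma keyC (a b c x0 x1 x2 x3 : ℂ)
    (h0 : a*(x1*x2*x3) + 2*b*x0*(x1^2+x2^2+x3^2) + 4*c*x0^3 = 0)
    (h3 : a*(x0*x1*x2) + 2*b*x3*(x0^2+x1^2+x2^2) + 4*c*x3^3 = 0)
    (hu1 : x1^2 = x0^2) (hu2 : x2^2 = x0^2) (hne : x3^2 ≠ x0^2) :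
    c = 0 ∨ (a^2*c + 4*b^3 - 12*b^2*c + 16*c^3) = 0 := by
  by_cases hc : c = 0
  · exact Or.inl hc
  right
  have E03 : (x0^2 - x3^2) * (2*b*(x0^2+x1^2+x2^2+x3^2) - (2*b-4*c)*(x0^2+x3^2)) = 0 := by
    linear_combination x0*h0 - x3*h3
  have hd : x0^2 - x3^2 ≠ 0 := sub_ne_zero.mpr (Ne.symm hne)
  have rel : 2*b*(x0^2+x1^2+x2^2+x3^2) - (2*b-4*c)*(x0^2+x3^2) = 0 :=
    (mul_eq_zero.mp E03).resolve_left hd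
  have hcw : c*x3^2 = -(b+c)*x0^2 := by
    linear_combination (1/4)*rel - (b/2)*hu1 - (b/2)*hu2
  have hx0 : x0 ≠ 0 := by
    intro h
    apply hne
    have : c * x3^2 = 0 := by rw [hcw, h]; ring
    have h3z : x3^2 = 0 := by
      rcases mul_eq_zero.mp this with h' | h'
      · exact absurd h' hc
      · exact h'
    rw [h3z, h]; ring
  by_cases hbc : b + c = 0
  · -- x3 = 0, then a = 0
    have h3z : x3 = 0 := by
      have : c * x3^2 = 0 := by rw [hcw, hbc]; ring
      have := (mul_eq_zero.mp this).resolve_left hc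
      exact pow_eq_zero_iff (n := 2) (by norm_num) |>.mp this
    have ha : a * (x0*x1*x2) = 0 := by
      rw [h3z] at h3; linear_combination h3
    have hx1 : x1 ≠ 0 := by
      intro h; rw [h] at hu1; exact hx0 (by simpa [pow_eq_zero_iff] using hu1.symm)
    have hx2 : x2 ≠ 0 := by
      intro h; rw [h] at hu2; exact hx0 (by simpa [pow_eq_zero_iff] using hu2.symm)
    have ha0 : a = 0 := by
      rcases mul_eq_zero.mp ha with h' | h'
      · exact h'
      · exact absurd h' (by simp [hx0, hx1, hx2])
    linear_combination a*c*ha0 + 4*(b-2*c)^2*hbc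
  · have hT : a*c*(x0*x1*x2*x3) - 2*(b-2*c)*(b+c)*x0^4 = 0 := by
      linear_combination c*x0*h0 - 2*b*c*x0^2*(hu1 + hu2) - 2*b*x0^2*hcw
    have hS : a^2*c^2*(x0*x1*x2*x3)^2 - 4*(b-2*c)^2*(b+c)^2*x0^8 = 0 := by
      linear_combination (a*c*(x0*x1*x2*x3) + 2*(b-2*c)*(b+c)*x0^4)*hT
    have hP2 : c*(x0*x1*x2*x3)^2 = -(b+c)*x0^8 := by
      have : c*(x0*x1*x2*x3)^2 = x0^2*x1^2*x2^2*(c*x3^2) := by ring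
      rw [this, hu1, hu2, hcw]; ring
    have hkey : ((b+c) * (c * (a^2*c + 4*b^3 - 12*b^2*c + 16*c^3))) * x0^8 = 0 := by
      linear_combination -c*hS + a^2*c^2*hP2
    have h1 := (mul_eq_zero.mp hkey).resolve_right (pow_ne_zero _ hx0)
    have h2 := (mul_eq_zero.mp h1).resolve_left hbc
    exact (mul_eq_zero.mp h2).resolve_left hc



lemma rel2 {u v S : ℂ} (h : (u - v) * S = 0) (hne : u ≠ v) : S = 0 :=
  (mul_eq_zero.mp h).resolve_left (sub_ne_zero.mpr hne)

lemma fwd (a b c x0 x1 x2 x3 : ℂ) (hx : ¬(x0 = 0 ∧ x1 = 0 ∧ x2 = 0 ∧ x3 = 0))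
    (h0 : a*(x1*x2*x3) + 2*b*x0*(x1^2+x2^2+x3^2) + 4*c*x0^3 = 0)
    (h1 : a*(x0*x2*x3) + 2*b*x1*(x0^2+x2^2+x3^2) + 4*c*x1^3 = 0)
    (h2 : a*(x0*x1*x3) + 2*b*x2*(x0^2+x1^2+x3^2) + 4*c*x2^3 = 0)
    (h3 : a*(x0*x1*x2) + 2*b*x3*(x0^2+x1^2+x2^2) + 4*c*x3^3 = 0) :
    c * (b + 2 * c) * (b - 2 * c) * (a + 2 * b - 4 * c) * (a - 2 * b + 4 * c) *
      (a - 6 * b - 4 * c) * (a + 6 * b + 4 * c) *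
      (a ^ 2 * c + 4 * b ^ 3 - 12 * b ^ 2 * c + 16 * c ^ 3) = 0 := by
  by_cases hb2c : b - 2*c = 0
  · linear_combination (c * (b + 2*c) * (a + 2*b - 4*c) * (a - 2*b + 4*c) *
      (a - 6*b - 4*c) * (a + 6*b + 4*c) *
      (a^2*c + 4*b^3 - 12*b^2*c + 16*c^3)) * hb2c
  have E01 : (x0^2 - x1^2) * (2*b*(x0^2+x1^2+x2^2+x3^2) - (2*b-4*c)*(x0^2+x1^2)) = 0 := by
    linear_combination x0*h0 - x1*h1
  have E02 : (x0^2 - x2^2) * (2*b*(x0^2+x1^2+x2^2+x3^2) - (2*b-4*c)*(x0^2+x2^2)) = 0 := by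
    linear_combination x0*h0 - x2*h2
  have E03 : (x0^2 - x3^2) * (2*b*(x0^2+x1^2+x2^2+x3^2) - (2*b-4*c)*(x0^2+x3^2)) = 0 := by
    linear_combination x0*h0 - x3*h3
  have E13 : (x1^2 - x3^2) * (2*b*(x0^2+x1^2+x2^2+x3^2) - (2*b-4*c)*(x1^2+x3^2)) = 0 := by
    linear_combination x1*h1 - x3*h3
  by_cases h01 : x0^2 = x1^2
  · by_cases h02 : x0^2 = x2^2
    · by_cases h03 : x0^2 = x3^2
      · -- all equal : keyA
        have hx0 : x0 ≠ 0 := by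
          intro hz
          apply hx
          refine ⟨hz, ?_, ?_, ?_⟩
          · rw [hz] at h01; simpa [pow_eq_zero_iff] using h01.symm
          · rw [hz] at h02; simpa [pow_eq_zero_iff] using h02.symm
          · rw [hz] at h03; simpa [pow_eq_zero_iff] using h03.symm
        have hA := keyA a b c x0 x1 x2 x3 hx0 h0 h01.symm h02.symm h03.symm
        linear_combination (c * (b + 2*c) * (b - 2*c) * (a + 2*b - 4*c) * (a - 2*b + 4*c) *
          (a^2*c + 4*b^3 - 12*b^2*c + 16*c^3)) * hA
      · -- u0=u1=u2 ≠ u3 : keyC id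
        rcases keyC a b c x0 x1 x2 x3 h0 h3 h01.symm h02.symm (fun h => h03 h.symm) with hC | hC
        · linear_combination ((b + 2*c) * (b - 2*c) * (a + 2*b - 4*c) * (a - 2*b + 4*c) *
            (a - 6*b - 4*c) * (a + 6*b + 4*c) *
            (a^2*c + 4*b^3 - 12*b^2*c + 16*c^3)) * hC
        · linear_combination (c * (b + 2*c) * (b - 2*c) * (a + 2*b - 4*c) * (a - 2*b + 4*c) *
            (a - 6*b - 4*c) * (a + 6*b + 4*c)) * hC
    · by_cases h03 : x0^2 = x3^2
      · -- u0=u1=u3 ≠ u2 : keyC (x0,x1,x3;x2)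
        have h0' : a*(x1*x3*x2) + 2*b*x0*(x1^2+x3^2+x2^2) + 4*c*x0^3 = 0 := by
          linear_combination h0
        have h3' : a*(x0*x1*x3) + 2*b*x2*(x0^2+x1^2+x3^2) + 4*c*x2^3 = 0 := by
          linear_combination h2
        rcases keyC a b c x0 x1 x3 x2 h0' h3' h01.symm h03.symm (fun h => h02 h.symm) with hC | hC
        · linear_combination ((b + 2*c) * (b - 2*c) * (a + 2*b - 4*c) * (a - 2*b + 4*c) *
            (a - 6*b - 4*c) * (a + 6*b + 4*c) *
            (a^2*c + 4*b^3 - 12*b^2*c + 16*c^3)) * hC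
        · linear_combination (c * (b + 2*c) * (b - 2*c) * (a + 2*b - 4*c) * (a - 2*b + 4*c) *
            (a - 6*b - 4*c) * (a + 6*b + 4*c)) * hC
      · by_cases h23 : x2^2 = x3^2
        · -- keyB id : u0=u1 ≠ u2=u3
          rcases keyB a b c x0 x1 x2 x3 h0 h2 h01.symm h23.symm (fun h => h02 h.symm) with hB | hB
          · linear_combination (c * (b - 2*c) * (a + 2*b - 4*c) * (a - 2*b + 4*c) *
              (a - 6*b - 4*c) * (a + 6*b + 4*c) *
              (a^2*c + 4*b^3 - 12*b^2*c + 16*c^3)) * hB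
          · linear_combination (c * (b + 2*c) * (b - 2*c) *
              (a - 6*b - 4*c) * (a + 6*b + 4*c) *
              (a^2*c + 4*b^3 - 12*b^2*c + 16*c^3)) * hB
        · -- u0, u2, u3 pairwise distinct
          have r02 := rel2 E02 (fun h => h02 h)
          have r03 := rel2 E03 (fun h => h03 h)
          have hk : (b - 2*c) * (x2^2 - x3^2) = 0 := by
            linear_combination (1/2)*r03 - (1/2)*r02
          exact absurd ((mul_eq_zero.mp hk).resolve_right
            (sub_ne_zero.mpr (fun h => h23 h))) hb2c
  · by_cases h02 : x0^2 = x2^2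
    · by_cases h03 : x0^2 = x3^2
      · -- u0=u2=u3 ≠ u1 : keyC (x0,x2,x3;x1)
        have h0' : a*(x2*x3*x1) + 2*b*x0*(x2^2+x3^2+x1^2) + 4*c*x0^3 = 0 := by
          linear_combination h0
        have h3' : a*(x0*x2*x3) + 2*b*x1*(x0^2+x2^2+x3^2) + 4*c*x1^3 = 0 := by
          linear_combination h1
        rcases keyC a b c x0 x2 x3 x1 h0' h3' h02.symm h03.symm (fun h => h01 h.symm) with hC | hC
        · linear_combination ((b + 2*c) * (b - 2*c) * (a + 2*b - 4*c) * (a - 2*b + 4*c) *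
            (a - 6*b - 4*c) * (a + 6*b + 4*c) *
            (a^2*c + 4*b^3 - 12*b^2*c + 16*c^3)) * hC
        · linear_combination (c * (b + 2*c) * (b - 2*c) * (a + 2*b - 4*c) * (a - 2*b + 4*c) *
            (a - 6*b - 4*c) * (a + 6*b + 4*c)) * hC
      · by_cases h13 : x1^2 = x3^2
        · -- u0=u2 ≠ u1=u3 : keyB (x0,x2,x1,x3)
          have h0' : a*(x2*x1*x3) + 2*b*x0*(x2^2+x1^2+x3^2) + 4*c*x0^3 = 0 := by
            linear_combination h0
          have h2' : a*(x0*x2*x3) + 2*b*x1*(x0^2+x2^2+x3^2) + 4*c*x1^3 = 0 := by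
            linear_combination h1
          rcases keyB a b c x0 x2 x1 x3 h0' h2' h02.symm h13.symm (fun h => h01 h.symm) with hB | hB
          · linear_combination (c * (b - 2*c) * (a + 2*b - 4*c) * (a - 2*b + 4*c) *
              (a - 6*b - 4*c) * (a + 6*b + 4*c) *
              (a^2*c + 4*b^3 - 12*b^2*c + 16*c^3)) * hB
          · linear_combination (c * (b + 2*c) * (b - 2*c) *
              (a - 6*b - 4*c) * (a + 6*b + 4*c) *
              (a^2*c + 4*b^3 - 12*b^2*c + 16*c^3)) * hB
        · -- u0, u1, u3 pairwise distinct
          have r01 := rel2 E01 (fun h => h01 h)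
          have r03 := rel2 E03 (fun h => h03 h)
          have hk : (b - 2*c) * (x1^2 - x3^2) = 0 := by
            linear_combination (1/2)*r03 - (1/2)*r01
          exact absurd ((mul_eq_zero.mp hk).resolve_right
            (sub_ne_zero.mpr (fun h => h13 h))) hb2c
    · by_cases h12 : x1^2 = x2^2
      · by_cases h03 : x0^2 = x3^2
        · -- u0=u3 ≠ u1=u2 : keyB (x0,x3,x1,x2)
          have h0' : a*(x3*x1*x2) + 2*b*x0*(x3^2+x1^2+x2^2) + 4*c*x0^3 = 0 := by
            linear_combination h0
          have h2' : a*(x0*x3*x2) + 2*b*x1*(x0^2+x3^2+x2^2) + 4*c*x1^3 = 0 := by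
            linear_combination h1
          rcases keyB a b c x0 x3 x1 x2 h0' h2' h03.symm h12.symm (fun h => h01 h.symm) with hB | hB
          · linear_combination (c * (b - 2*c) * (a + 2*b - 4*c) * (a - 2*b + 4*c) *
              (a - 6*b - 4*c) * (a + 6*b + 4*c) *
              (a^2*c + 4*b^3 - 12*b^2*c + 16*c^3)) * hB
          · linear_combination (c * (b + 2*c) * (b - 2*c) *
              (a - 6*b - 4*c) * (a + 6*b + 4*c) *
              (a^2*c + 4*b^3 - 12*b^2*c + 16*c^3)) * hB
        · by_cases h13 : x1^2 = x3^2
          · -- u1=u2=u3 ≠ u0 : keyC (x1,x2,x3;x0)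
            have h0' : a*(x2*x3*x0) + 2*b*x1*(x2^2+x3^2+x0^2) + 4*c*x1^3 = 0 := by
              linear_combination h1
            have h3' : a*(x1*x2*x3) + 2*b*x0*(x1^2+x2^2+x3^2) + 4*c*x0^3 = 0 := by
              linear_combination h0
            rcases keyC a b c x1 x2 x3 x0 h0' h3' h12.symm h13.symm (fun h => h01 h) with hC | hC
            · linear_combination ((b + 2*c) * (b - 2*c) * (a + 2*b - 4*c) * (a - 2*b + 4*c) *
                (a - 6*b - 4*c) * (a + 6*b + 4*c) *
                (a^2*c + 4*b^3 - 12*b^2*c + 16*c^3)) * hC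
            · linear_combination (c * (b + 2*c) * (b - 2*c) * (a + 2*b - 4*c) * (a - 2*b + 4*c) *
                (a - 6*b - 4*c) * (a + 6*b + 4*c)) * hC
          · -- u0, u1, u3 pairwise distinct
            have r01 := rel2 E01 (fun h => h01 h)
            have r13 := rel2 E13 (fun h => h13 h)
            have hk : (b - 2*c) * (x0^2 - x3^2) = 0 := by
              linear_combination (1/2)*r13 - (1/2)*r01
            exact absurd ((mul_eq_zero.mp hk).resolve_right
              (sub_ne_zero.mpr (fun h => h03 h))) hb2c
      · -- u0, u1, u2 pairwise distinct
        have r01 := rel2 E01 (fun h => h01 h)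
        have r02 := rel2 E02 (fun h => h02 h)
        have hk : (b - 2*c) * (x1^2 - x2^2) = 0 := by
          linear_combination (1/2)*r02 - (1/2)*r01
        exact absurd ((mul_eq_zero.mp hk).resolve_right
          (sub_ne_zero.mpr (fun h => h12 h))) hb2c


lemma e0 (a b c : ℂ) (x : Fin 4 → ℂ) :
    eval x (pderiv 0 (quartic a b c)) =
      a*(x 1*x 2*x 3) + 2*b*(x 0)*((x 1)^2+(x 2)^2+(x 3)^2) + 4*c*(x 0)^3 := by
  simp [quartic, pderiv_mul, pderiv_pow, pderiv_X, Pi.single_apply]; ring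

lemma e1 (a b c : ℂ) (x : Fin 4 → ℂ) :
    eval x (pderiv 1 (quartic a b c)) =
      a*(x 0*x 2*x 3) + 2*b*(x 1)*((x 0)^2+(x 2)^2+(x 3)^2) + 4*c*(x 1)^3 := by
  simp [quartic, pderiv_mul, pderiv_pow, pderiv_X, Pi.single_apply]; ring

lemma e2 (a b c : ℂ) (x : Fin 4 → ℂ) :
    eval x (pderiv 2 (quartic a b c)) =
      a*(x 0*x 1*x 3) + 2*b*(x 2)*((x 0)^2+(x 1)^2+(x 3)^2) + 4*c*(x 2)^3 := by
  simp [quartic, pderiv_mul, pderiv_pow, pderiv_X, Pi.single_apply]; ring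

lemma e3 (a b c : ℂ) (x : Fin 4 → ℂ) :
    eval x (pderiv 3 (quartic a b c)) =
      a*(x 0*x 1*x 2) + 2*b*(x 3)*((x 0)^2+(x 1)^2+(x 2)^2) + 4*c*(x 3)^3 := by
  simp [quartic, pderiv_mul, pderiv_pow, pderiv_X, Pi.single_apply]; ring

lemma allzero (a b c p q r s : ℂ)
    (g0 : a*(q*r*s) + 2*b*p*(q^2+r^2+s^2) + 4*c*p^3 = 0)
    (g1 : a*(p*r*s) + 2*b*q*(p^2+r^2+s^2) + 4*c*q^3 = 0)
    (g2 : a*(p*q*s) + 2*b*r*(p^2+q^2+s^2) + 4*c*r^3 = 0)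
    (g3 : a*(p*q*r) + 2*b*s*(p^2+q^2+r^2) + 4*c*s^3 = 0) :
    ∀ i : Fin 4, eval ![p,q,r,s] (pderiv i (quartic a b c)) = 0 := by
  intro i
  fin_cases i
  · show eval ![p,q,r,s] (pderiv 0 (quartic a b c)) = 0
    rw [e0]; simpa using g0
  · show eval ![p,q,r,s] (pderiv 1 (quartic a b c)) = 0
    rw [e1]; simpa using g1
  · show eval ![p,q,r,s] (pderiv 2 (quartic a b c)) = 0
    rw [e2]; simpa using g2
  · show eval ![p,q,r,s] (pderiv 3 (quartic a b c)) = 0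
    rw [e3]; simpa using g3

lemma wit (a b c p q r s : ℂ) (hp : q ≠ 0)
    (g0 : a*(q*r*s) + 2*b*p*(q^2+r^2+s^2) + 4*c*p^3 = 0)
    (g1 : a*(p*r*s) + 2*b*q*(p^2+r^2+s^2) + 4*c*q^3 = 0)
    (g2 : a*(p*q*s) + 2*b*r*(p^2+q^2+s^2) + 4*c*r^3 = 0)
    (g3 : a*(p*q*r) + 2*b*s*(p^2+q^2+r^2) + 4*c*s^3 = 0) :
    ∃ x : Fin 4 → ℂ, x ≠ 0 ∧ ∀ i : Fin 4, eval x (pderiv i (quartic a b c)) = 0 := by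
  refine ⟨![p,q,r,s], ?_, allzero a b c p q r s g0 g1 g2 g3⟩
  intro h
  exact hp (by simpa using congrFun h 1)


end St17

theorem statement17 (a b c : ℂ) (h : ¬(a = 0 ∧ b = 0 ∧ c = 0)) :
    (∃ x : Fin 4 → ℂ, x ≠ 0 ∧
        ∀ i : Fin 4, MvPolynomial.eval x (MvPolynomial.pderiv i (quartic a b c)) = 0) ↔
      c * (b + 2 * c) * (b - 2 * c) * (a + 2 * b - 4 * c) * (a - 2 * b + 4 * c) *
        (a - 6 * b - 4 * c) * (a + 6 * b + 4 * c) *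
        (a ^ 2 * c + 4 * b ^ 3 - 12 * b ^ 2 * c + 16 * c ^ 3) = 0 := by
  constructor
  · rintro ⟨x, hxne, hd⟩
    have hx : ¬(x 0 = 0 ∧ x 1 = 0 ∧ x 2 = 0 ∧ x 3 = 0) := by
      rintro ⟨z0, z1, z2, z3⟩
      apply hxne
      funext i
      fin_cases i
      · exact z0
      · exact z1
      · exact z2
      · exact z3
    have h0 := (St17.e0 a b c x) ▸ hd 0
    have h1 := (St17.e1 a b c x) ▸ hd 1
    have h2 := (St17.e2 a b c x) ▸ hd 2
    have h3 := (St17.e3 a b c x) ▸ hd 3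
    exact St17.fwd a b c (x 0) (x 1) (x 2) (x 3) hx h0 h1 h2 h3
  · intro hD
    rcases mul_eq_zero.mp hD with hD | hf8
    rcases mul_eq_zero.mp hD with hD | hf7
    rcases mul_eq_zero.mp hD with hD | hf6
    rcases mul_eq_zero.mp hD with hD | hf5
    rcases mul_eq_zero.mp hD with hD | hf4
    rcases mul_eq_zero.mp hD with hD | hf3
    rcases mul_eq_zero.mp hD with hf1 | hf2
    · -- c = 0, point (0,1,0,0)
      exact St17.wit a b c 0 1 0 0 one_ne_zero (by ring) (by linear_combination 4*hf1)
        (by ring) (by ring)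
    · -- b + 2c = 0, point (1,1,0,0)
      exact St17.wit a b c 1 1 0 0 one_ne_zero (by linear_combination 2*hf2)
        (by linear_combination 2*hf2) (by ring) (by ring)
    · -- b - 2c = 0, point (1,I,0,0)
      exact St17.wit a b c 1 Complex.I 0 0 Complex.I_ne_zero
        (by linear_combination -2*hf3 + 2*b*Complex.I_sq)
        (by linear_combination 2*Complex.I*hf3 + 4*c*Complex.I*Complex.I_sq)
        (by ring) (by ring)
    · -- a + 2b - 4c = 0, point (1,1,I,I)
      exact St17.wit a b c 1 1 Complex.I Complex.I one_ne_zero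
        (by linear_combination -hf4 + (a+4*b)*Complex.I_sq)
        (by linear_combination -hf4 + (a+4*b)*Complex.I_sq)
        (by linear_combination Complex.I*hf4 + (2*b+4*c)*Complex.I*Complex.I_sq)
        (by linear_combination Complex.I*hf4 + (2*b+4*c)*Complex.I*Complex.I_sq)
    · -- a - 2b + 4c = 0, point (1,-1,I,I)
      exact St17.wit a b c 1 (-1) Complex.I Complex.I (by norm_num)
        (by linear_combination hf5 + (4*b-a)*Complex.I_sq)
        (by linear_combination -hf5 + (a-4*b)*Complex.I_sq)
        (by linear_combination -Complex.I*hf5 + (2*b+4*c)*Complex.I*Complex.I_sq)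
        (by linear_combination -Complex.I*hf5 + (2*b+4*c)*Complex.I*Complex.I_sq)
    · -- a - 6b - 4c = 0, point (1,1,1,-1)
      exact St17.wit a b c 1 1 1 (-1) one_ne_zero
        (by linear_combination -hf6) (by linear_combination -hf6)
        (by linear_combination -hf6) (by linear_combination hf6)
    · -- a + 6b + 4c = 0, point (1,1,1,1)
      exact St17.wit a b c 1 1 1 1 one_ne_zero
        (by linear_combination hf7) (by linear_combination hf7)
        (by linear_combination hf7) (by linear_combination hf7)
    · -- last factor
      by_cases hc : c = 0
      · exact St17.wit a b c 0 1 0 0 one_ne_zero (by ring) (by linear_combination 4*hc)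
          (by ring) (by ring)
      by_cases ha : a = 0
      · have h4 : (4*(b+c)) * (b-2*c)^2 = 0 := by linear_combination hf8 - a*c*ha
        rcases mul_eq_zero.mp h4 with h4 | h4
        · have hbc : b + c = 0 := by linear_combination (1/4)*h4
          exact St17.wit a b c 1 1 1 0 one_ne_zero
            (by linear_combination 4*hbc) (by linear_combination 4*hbc)
            (by linear_combination 4*hbc) (by linear_combination ha)
        · have hb2c : b - 2*c = 0 := by
            exact pow_eq_zero_iff (n := 2) (by norm_num) |>.mp h4
          exact St17.wit a b c 1 Complex.I 0 0 Complex.I_ne_zero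
            (by linear_combination -2*hb2c + 2*b*Complex.I_sq)
            (by linear_combination 2*Complex.I*hb2c + 4*c*Complex.I*Complex.I_sq)
            (by ring) (by ring)
      · refine St17.wit a b c (2*(b-2*c)*(b+c)/(a*c)) 1 1 1 one_ne_zero ?_ ?_ ?_ ?_
        · field_simp
          linear_combination (a^2*c + 8*(b-2*c)*(b+c)^2) * hf8
        · field_simp
          linear_combination (2*b*(b+c)) * hf8
        · field_simp
          linear_combination (2*b*(b+c)) * hf8
        · field_simp
          linear_combination (2*b*(b+c)) * hf8

end
end
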